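/- arXiv:2009.09297 — 8 statements merged into one kernel-verified Lean document; each statement's English description precedes it below -/
import Mathlib

section
/- Let G be a Frattini-injective pro-p group (distinct finitely generated closed subgroups of G have distinct Frattini subgroups), and let H be a finitely generated closed subgroup of G. Then the normalizer of H in G equals the normalizer of the Frattini subgroup Φ(H) in G. In particular, H is normal in G if and only if Φ(H) is normal in G. -/
/-- A pro-`p` group: a compact Hausdorff totally disconnected topological group in which
every open normal subgroup has index a power of `p`. -/
def IsProPGroup (p : ℕ) (G : Type*) [Group G] [TopologicalSpace G] [IsTopologicalGroup G] : Prop :=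
  CompactSpace G ∧ T2Space G ∧ TotallyDisconnectedSpace G ∧
    ∀ U : Subgroup G, U.Normal → IsOpen (U : Set G) → ∃ n : ℕ, U.index = p ^ n

/-- The Frattini subgroup of a subgroup `H` of `G`, viewed as a subgroup of `G`:
the intersection of all maximal open subgroups of `H` (taken inside `H`), mapped into `G`. -/
def frattiniOf {G : Type*} [Group G] [TopologicalSpace G] (H : Subgroup G) : Subgroup G :=
  (⨅ M ∈ {M : Subgroup ↥H | IsOpen (M : Set ↥H) ∧ IsCoatom M}, M).map H.subtype

/-- `H` is topologically finitely generated. -/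
def TopFG {G : Type*} [Group G] [TopologicalSpace G] [IsTopologicalGroup G] (H : Subgroup G) : Prop :=
  ∃ S : Finset G, (Subgroup.closure (S : Set G)).topologicalClosure = H

/-- The minimal number of topological generators of `H`. -/
noncomputable def genNum {G : Type*} [Group G] [TopologicalSpace G] [IsTopologicalGroup G]
    (H : Subgroup G) : ℕ :=
  sInf {n | ∃ S : Finset G, S.card = n ∧ (Subgroup.closure (S : Set G)).topologicalClosure = H}

/-- `G` is Frattini-injective: distinct finitely generated closed subgroups have
distinct Frattini subgroups. -/
def FrattiniInjective (G : Type*) [Group G] [TopologicalSpace G] [IsTopologicalGroup G] : Prop :=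
  ∀ H K : Subgroup G, IsClosed (H : Set G) → IsClosed (K : Set G) → TopFG H → TopFG K →
    frattiniOf H = frattiniOf K → H = K

/-- `(G, K, H)` is a hierarchical triple: `x ^ p ∈ H` implies `x ∈ K`. -/
def Hierarchical (p : ℕ) {G : Type*} [Group G] (K H : Subgroup G) : Prop :=
  ∀ x : G, x ^ p ∈ H → x ∈ K

/-- `G` is Frattini-resistant: `(G, H, Φ(H))` is hierarchical for every finitely generated
closed subgroup `H`. -/
def FrattiniResistant (p : ℕ) (G : Type*) [Group G] [TopologicalSpace G] [IsTopologicalGroup G] :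
    Prop :=
  ∀ H : Subgroup G, IsClosed (H : Set G) → TopFG H → Hierarchical p H (frattiniOf H)

/-- The closed commutator subgroup of `H`, as a subgroup of the ambient group. -/
def commClosure {G : Type*} [Group G] [TopologicalSpace G] [IsTopologicalGroup G]
    (H : Subgroup G) : Subgroup G :=
  (⁅H, H⁆ : Subgroup G).topologicalClosure


section Aux

variable {G : Type*} [Group G] [TopologicalSpace G] [IsTopologicalGroup G]

set_option linter.unusedSectionVars false

lemma map_topologicalClosure' (e : G ≃* G) (he : Continuous e) (hes : Continuous e.symm)
    (K : Subgroup G) :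
    K.topologicalClosure.map e.toMonoidHom = (K.map e.toMonoidHom).topologicalClosure := by
  apply SetLike.coe_injective
  rw [Subgroup.coe_map, Subgroup.topologicalClosure_coe, Subgroup.topologicalClosure_coe,
    Subgroup.coe_map]
  exact (Homeomorph.mk e.toEquiv he hes).image_closure (K : Set G)

lemma topFG_map (e : G ≃* G) (he : Continuous e) (hes : Continuous e.symm)
    {H : Subgroup G} (hH : TopFG H) : TopFG (H.map e.toMonoidHom) := by
  classical
  obtain ⟨S, hS⟩ := hH
  refine ⟨S.image e, ?_⟩
  rw [Finset.coe_image]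
  have himg : (⇑e '' (S : Set G)) = ⇑e.toMonoidHom '' (S : Set G) := rfl
  rw [himg, ← MonoidHom.map_closure, ← map_topologicalClosure' e he hes, hS]

lemma isClosed_map (e : G ≃* G) (he : Continuous e) (hes : Continuous e.symm)
    {H : Subgroup G} (hH : IsClosed (H : Set G)) :
    IsClosed ((H.map e.toMonoidHom : Subgroup G) : Set G) := by
  rw [Subgroup.coe_map]
  exact (Homeomorph.mk e.toEquiv he hes).isClosedMap _ hH

lemma frattiniOf_map (e : G ≃* G) (he : Continuous e) (hes : Continuous e.symm)
    (H : Subgroup G) :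
    frattiniOf (H.map e.toMonoidHom) = (frattiniOf H).map e.toMonoidHom := by
  classical
  set φ : ↥H ≃* ↥(H.map e.toMonoidHom) := e.subgroupMap H with hφ
  have hφc : Continuous φ := by
    apply continuous_induced_rng.mpr
    have : (Subtype.val ∘ φ) = (e ∘ Subtype.val : ↥H → G) := by
      funext x; exact e.coe_subgroupMap_apply H x
    rw [this]
    exact he.comp continuous_subtype_val
  have hφsc : Continuous φ.symm := by
    apply continuous_induced_rng.mpr
    have : (Subtype.val ∘ φ.symm) = (e.symm ∘ Subtype.val : ↥(H.map e.toMonoidHom) → G) := by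
      funext x
      exact congrArg Subtype.val (e.subgroupMap_symm_apply H x)
    rw [this]
    exact hes.comp continuous_subtype_val
  set ψ := φ.mapSubgroup with hψ
  have hSet : {M : Subgroup ↥(H.map e.toMonoidHom) | IsOpen (M : Set ↥(H.map e.toMonoidHom)) ∧ IsCoatom M}
      = ψ '' {M : Subgroup ↥H | IsOpen (M : Set ↥H) ∧ IsCoatom M} := by
    ext N
    constructor
    · rintro ⟨hNo, hNc⟩
      refine ⟨ψ.symm N, ⟨?_, ?_⟩, ψ.apply_symm_apply N⟩
      · have : (↑(ψ.symm N) : Set ↥H) = φ.symm '' (N : Set _) := Subgroup.coe_map _ _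
        rw [this]
        exact (Homeomorph.mk φ.toEquiv hφc hφsc).symm.isOpen_image.mpr hNo
      · exact (ψ.isCoatom_iff _).mp (by rwa [ψ.apply_symm_apply])
    · rintro ⟨M, ⟨hMo, hMc⟩, rfl⟩
      constructor
      · have : (↑(ψ M) : Set ↥(H.map e.toMonoidHom)) = φ '' (M : Set _) := Subgroup.coe_map _ _
        rw [this]
        exact (Homeomorph.mk φ.toEquiv hφc hφsc).isOpen_image.mpr hMo
      · exact (ψ.isCoatom_iff M).mpr hMc
  unfold frattiniOf
  rw [← sInf_eq_iInf, ← sInf_eq_iInf, hSet, sInf_image, ← ψ.map_sInf]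
  show (Subgroup.map (φ : ↥H →* ↥(H.map e.toMonoidHom)) _).map (H.map e.toMonoidHom).subtype = _
  rw [Subgroup.map_map, Subgroup.map_map]
  congr 1


lemma mem_normalizer_iff_conjMap {g : G} {K : Subgroup G} :
    g ∈ Subgroup.normalizer (K : Set G) ↔ K.map (MulAut.conj g).toMonoidHom = K := by
  rw [Subgroup.mem_normalizer_iff]
  constructor
  · intro h
    ext x
    simp only [Subgroup.mem_map, MulEquiv.coe_toMonoidHom, MulAut.conj_apply]
    constructor
    · rintro ⟨y, hy, rfl⟩
      exact (h y).mp hy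
    · intro hx
      refine ⟨g⁻¹ * x * g, ?_, by group⟩
      have := (h (g⁻¹ * x * g)).mpr
      apply this
      have hx' : g * (g⁻¹ * x * g) * g⁻¹ = x := by group
      rwa [hx']
  · intro h n
    constructor
    · intro hn
      have : g * n * g⁻¹ ∈ K.map (MulAut.conj g).toMonoidHom :=
        ⟨n, hn, by simp [MulAut.conj_apply]⟩
      rwa [h] at this
    · intro hn
      rw [← h] at hn
      obtain ⟨y, hy, hyx⟩ := hn
      simp only [MulEquiv.coe_toMonoidHom, MulAut.conj_apply] at hyx
      have : y = n := by
        have h3 := hyx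
        simp only [mul_left_inj, mul_right_inj] at h3
        exact h3
      rwa [← this]

end Aux

/-- In a Frattini-injective pro-`p` group, the normalizer of a finitely
generated closed subgroup `H` equals the normalizer of its Frattini subgroup; in particular
`H` is normal iff `Φ(H)` is normal. -/
theorem stmt_0 {p : ℕ} (hp : p.Prime) (G : Type*) [Group G] [TopologicalSpace G]
    [IsTopologicalGroup G] (hG : IsProPGroup p G) (hFI : FrattiniInjective G)
    (H : Subgroup G) (hHc : IsClosed (H : Set G)) (hHfg : TopFG H) :
    Subgroup.normalizer (H : Set G) = Subgroup.normalizer (frattiniOf H : Set G) ∧ (H.Normal ↔ (frattiniOf H).Normal) := by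
  have hc : ∀ g : G, Continuous ⇑(MulAut.conj g) := by
    intro g
    have : ⇑(MulAut.conj g) = fun x : G => g * x * g⁻¹ := funext fun x => MulAut.conj_apply g x
    rw [this]
    exact (continuous_mul_left g).mul continuous_const
  have hcs : ∀ g : G, Continuous ⇑(MulAut.conj g).symm := by
    intro g
    have : ⇑(MulAut.conj g).symm = fun x : G => g⁻¹ * x * g :=
      funext fun x => MulAut.conj_symm_apply g x
    rw [this]
    exact (continuous_mul_left g⁻¹).mul continuous_const
  have key : Subgroup.normalizer (H : Set G) = Subgroup.normalizer (frattiniOf H : Set G) := by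
    ext g
    rw [mem_normalizer_iff_conjMap, mem_normalizer_iff_conjMap]
    constructor
    · intro h
      rw [← frattiniOf_map (MulAut.conj g) (hc g) (hcs g) H, h]
    · intro h
      have h2 : frattiniOf (H.map (MulAut.conj g).toMonoidHom) = frattiniOf H := by
        rw [frattiniOf_map (MulAut.conj g) (hc g) (hcs g) H, h]
      exact hFI _ _ (isClosed_map _ (hc g) (hcs g) hHc) hHc
        (topFG_map _ (hc g) (hcs g) hHfg) hHfg h2
  exact ⟨key, by rw [← Subgroup.normalizer_eq_top_iff, ← Subgroup.normalizer_eq_top_iff, key]⟩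
end

section
/- Every maximal abelian closed subgroup of a Frattini-injective pro-p group is isolated, i.e., if A is a maximal abelian closed subgroup of G and x ∈ G satisfies x^p ∈ A, then x ∈ A. -/
open Subgroup Pointwise



section Aux

variable {G : Type*} [Group G] [TopologicalSpace G] [IsTopologicalGroup G]

private lemma myComm_closure {s : Set G} (hs : ∀ a ∈ s, ∀ b ∈ s, a * b = b * a)
    {a b : G} (ha : a ∈ Subgroup.closure s) (hb : b ∈ Subgroup.closure s) : a * b = b * a :=
  closure_induction₂ (p := fun x y _ _ => x * y = y * x) (fun x y hx hy => hs x hx y hy)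
    (fun x _ => (Commute.one_left x))
    (fun x _ => (Commute.one_right x))
    (fun _ _ _ _ _ _ h1 h2 => (Commute.mul_left h1 h2 : _))
    (fun _ _ _ _ _ _ h1 h2 => (Commute.mul_right h1 h2 : _))
    (fun _ _ _ _ h => (Commute.inv_left h : _))
    (fun _ _ _ _ h => (Commute.inv_right h : _)) ha hb

private lemma myComm_topClosure [T2Space G] {s : Set G} (hs : ∀ a ∈ s, ∀ b ∈ s, a * b = b * a)
    {a b : G} (ha : a ∈ (Subgroup.closure s).topologicalClosure)
    (hb : b ∈ (Subgroup.closure s).topologicalClosure) : a * b = b * a := by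
  have step1 : ∀ v ∈ (closure s : Subgroup G), ∀ u ∈ _root_.closure ((closure s : Subgroup G) : Set G),
      u * v = v * u := by
    intro v hv
    have hcl : IsClosed {u : G | u * v = v * u} :=
      isClosed_eq (continuous_id.mul continuous_const) (continuous_const.mul continuous_id)
    exact fun u hu => closure_minimal (fun w hw => myComm_closure hs hw hv) hcl hu
  have hcl2 : IsClosed {w : G | a * w = w * a} :=
    isClosed_eq (continuous_const.mul continuous_id) (continuous_id.mul continuous_const)
  exact closure_minimal (fun w hw => step1 w hw a ha) hcl2 hb

end Aux


section Prof

variable {P : Type*} [Group P] [TopologicalSpace P] [IsTopologicalGroup P]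
  [CompactSpace P] [T2Space P] [TotallyDisconnectedSpace P]

private lemma myExists_openNormal_subset {W : Set P} (hW : IsOpen W) (h1 : (1 : P) ∈ W) :
    ∃ V : Subgroup P, V.Normal ∧ IsOpen (V : Set P) ∧ (V : Set P) ⊆ W := by
  obtain ⟨C, hC, h1C, hCW⟩ := compact_exists_isClopen_in_isOpen hW h1
  obtain ⟨V, hV⟩ := IsTopologicalGroup.exist_openNormalSubgroup_sub_clopen_nhds_of_one hC h1C
  exact ⟨V.toSubgroup, V.isNormal', V.toOpenSubgroup.isOpen, fun g hg => hCW (hV hg)⟩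

private lemma myEq_one_of_mem_all {g : P}
    (hg : ∀ V : Subgroup P, V.Normal → IsOpen (V : Set P) → g ∈ V) : g = 1 := by
  by_contra hne
  have hopen : IsOpen ({g}ᶜ : Set P) := isClosed_singleton.isOpen_compl
  obtain ⟨V, hN, hO, hsub⟩ := myExists_openNormal_subset hopen (by simpa using Ne.symm hne)
  exact hsub (hg V hN hO) rfl

private lemma mySeparation {C : Subgroup P} (hC : IsClosed (C : Set P)) {h : P} (hh : h ∉ C) :
    ∃ U : Subgroup P, IsOpen (U : Set P) ∧ C ≤ U ∧ h ∉ U := by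
  have key : ∃ V : Subgroup P, V.Normal ∧ IsOpen (V : Set P) ∧
      ∀ c ∈ C, c ∉ (h * ·) '' (V : Set P) := by
    by_contra hcon
    push_neg at hcon
    set ι := {V : Subgroup P // V.Normal ∧ IsOpen (V : Set P)} with hι
    haveI : Nonempty ι := ⟨⟨⊤, inferInstance, by rw [Subgroup.coe_top]; exact isOpen_univ⟩⟩
    set f : ι → Set P := fun V => (C : Set P) ∩ (h * ·) '' (V.1 : Set P) with hf
    have hdir : Directed (· ⊇ ·) f := by
      intro V₁ V₂
      have hnorm : (V₁.1 ⊓ V₂.1).Normal :=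
        { conj_mem := fun n hn g => ⟨V₁.2.1.conj_mem n hn.1 g, V₂.2.1.conj_mem n hn.2 g⟩ }
      have hopen : IsOpen ((V₁.1 ⊓ V₂.1 : Subgroup P) : Set P) := by
        rw [Subgroup.coe_inf]; exact V₁.2.2.inter V₂.2.2
      have hsub1 : ((V₁.1 ⊓ V₂.1 : Subgroup P) : Set P) ⊆ (V₁.1 : Set P) := by
        rw [Subgroup.coe_inf]; exact Set.inter_subset_left
      have hsub2 : ((V₁.1 ⊓ V₂.1 : Subgroup P) : Set P) ⊆ (V₂.1 : Set P) := by
        rw [Subgroup.coe_inf]; exact Set.inter_subset_right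
      exact ⟨⟨V₁.1 ⊓ V₂.1, hnorm, hopen⟩,
        fun x hx => ⟨hx.1, Set.image_mono hsub1 hx.2⟩,
        fun x hx => ⟨hx.1, Set.image_mono hsub2 hx.2⟩⟩
    have hne : ∀ V : ι, (f V).Nonempty := by
      intro V
      obtain ⟨c, hcC, hcim⟩ := hcon V.1 V.2.1 V.2.2
      exact ⟨c, hcC, hcim⟩
    have hcl : ∀ V : ι, IsClosed (f V) := by
      intro V
      refine hC.inter ?_
      have : IsClosed (V.1 : Set P) := V.1.isClosed_of_isOpen V.2.2
      exact (Homeomorph.mulLeft h).isClosedMap _ this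
    obtain ⟨c, hc⟩ := IsCompact.nonempty_iInter_of_directed_nonempty_isCompact_isClosed f hdir hne
      (fun V => (hcl V).isCompact) hcl
    simp only [Set.mem_iInter] at hc
    have hcC : c ∈ C := (hc ⟨⊤, inferInstance, by rw [Subgroup.coe_top]; exact isOpen_univ⟩).1
    have : h⁻¹ * c = 1 := by
      apply myEq_one_of_mem_all
      intro V hN hO
      obtain ⟨v, hv, hveq⟩ := (hc ⟨V, hN, hO⟩).2
      have : v = h⁻¹ * c := by rw [← hveq]; group
      rwa [this] at hv
    have : c = h := by rw [inv_mul_eq_one] at this; exact this.symm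
    exact hh (this ▸ hcC)
  obtain ⟨V, hVN, hVO, hdisj⟩ := key
  haveI := hVN
  refine ⟨C ⊔ V, Subgroup.isOpen_mono le_sup_right hVO, le_sup_left, fun hmem => ?_⟩
  have : h ∈ ((C : Set P) * (V : Set P)) := by
    rw [← Subgroup.mul_normal C V]; exact hmem
  obtain ⟨c, hcC, v, hvV, hcv⟩ := this
  exact hdisj c hcC ⟨v⁻¹, inv_mem hvV, by rw [← hcv]; group⟩

end Prof


private lemma myExists_coatom {P : Type*} [Group P] [TopologicalSpace P] [IsTopologicalGroup P]
    [CompactSpace P] (hcomm : ∀ a b : P, a * b = b * a)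
    {U : Subgroup P} (hUO : IsOpen (U : Set P)) {h : P} (hhU : h ∉ U)
    {p : ℕ} (hp : p.Prime) (hpow : ∀ t : P, t ^ p ∈ U) :
    ∃ M : Subgroup P, IsOpen (M : Set P) ∧ IsCoatom M ∧ h ∉ M := by
  have hnormal : ∀ K : Subgroup P, K.Normal := fun K =>
    ⟨fun n hn g => by simpa [hcomm g n, mul_assoc] using hn⟩
  haveI := hnormal U
  haveI : Finite (P ⧸ U) := U.quotient_finite_of_isOpen hUO
  set S : Set (Subgroup P) := {M | U ≤ M ∧ h ∉ M} with hS
  have hSfin : S.Finite := by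
    have hinj : Set.InjOn (fun M : Subgroup P => M.map (QuotientGroup.mk' U)) S := by
      intro M₁ h₁ M₂ h₂ heq
      have e1 : Subgroup.comap (QuotientGroup.mk' U) (Subgroup.map (QuotientGroup.mk' U) M₁)
          = M₁ := by
        rw [Subgroup.comap_map_eq, QuotientGroup.ker_mk', sup_of_le_left h₁.1]
      have e2 : Subgroup.comap (QuotientGroup.mk' U) (Subgroup.map (QuotientGroup.mk' U) M₂)
          = M₂ := by
        rw [Subgroup.comap_map_eq, QuotientGroup.ker_mk', sup_of_le_left h₂.1]
      rw [← e1, ← e2]; exact congrArg _ heq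
    exact Set.Finite.of_finite_image (Set.toFinite _) hinj
  obtain ⟨M, hM, hmax⟩ : ∃ M ∈ S, ∀ N ∈ S, id M ≤ id N → id M = id N := by
    obtain ⟨M, hM, hmax⟩ := Set.Finite.exists_maximalFor id S hSfin ⟨U, le_rfl, hhU⟩
    exact ⟨M, hM, fun N hN hle => le_antisymm hle (hmax hN hle)⟩
  simp only [id] at hmax
  refine ⟨M, Subgroup.isOpen_mono hM.1 hUO, ⟨fun e => hM.2 (e ▸ Subgroup.mem_top h), ?_⟩, hM.2⟩
  intro N hMN
  have hhN : h ∈ N := by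
    by_contra hhN
    exact hMN.ne (hmax N ⟨hM.1.trans hMN.le, hhN⟩ hMN.le)
  rw [eq_top_iff']
  intro t
  by_cases htM : t ∈ M
  · exact hMN.le htM
  · have htpM : t ^ p ∈ M := hM.1 (hpow t)
    have hsup : h ∈ M ⊔ zpowers t := by
      by_contra hns
      have := hmax _ ⟨hM.1.trans le_sup_left, hns⟩ le_sup_left
      exact htM (this ▸ Subgroup.mem_sup_right (Subgroup.mem_zpowers t))
    haveI := hnormal (zpowers t)
    have hmem : h ∈ ((M : Set P) * ((zpowers t : Subgroup P) : Set P)) := by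
      rw [← Subgroup.mul_normal]; exact hsup
    obtain ⟨m, hm, w, hw, hmw⟩ := hmem
    obtain ⟨k, hk⟩ := hw
    have hknd : ¬ ((p : ℤ) ∣ k) := by
      rintro ⟨q, rfl⟩
      apply hM.2
      have : w ∈ M := by
        rw [← hk]
        show t ^ ((p : ℤ) * q) ∈ M
        rw [zpow_mul, zpow_natCast]
        exact Subgroup.zpow_mem M htpM q
      rw [← hmw]
      exact mul_mem hm this
    have hcop : IsCoprime (p : ℤ) k :=
      (Prime.coprime_iff_not_dvd (Nat.prime_iff_prime_int.mp hp)).mpr hknd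
    obtain ⟨a, b, hab⟩ := hcop
    have htk : t ^ k ∈ N := by
      have : t ^ k = m⁻¹ * h := by
        rw [← hmw]; show t ^ k = m⁻¹ * (m * w); rw [← hk]; group
      rw [this]
      exact mul_mem (inv_mem (hMN.le hm)) hhN
    have htp : t ^ (p : ℤ) ∈ N := by
      rw [zpow_natCast]
      exact hMN.le htpM
    have : t = (t ^ (p : ℤ)) ^ a * (t ^ k) ^ b := by
      rw [← zpow_mul, ← zpow_mul, ← zpow_add, mul_comm (p : ℤ) a, mul_comm k b, hab, zpow_one]
    rw [this]
    exact mul_mem (Subgroup.zpow_mem N htp a) (Subgroup.zpow_mem N htk b)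


private lemma myFrattini_procyclic {p : ℕ} (hp : p.Prime) {G : Type*} [Group G]
    [TopologicalSpace G] [IsTopologicalGroup G] (hG : IsProPGroup p G) (y : G) :
    frattiniOf ((Subgroup.closure {y}).topologicalClosure)
      = (Subgroup.closure {y ^ p}).topologicalClosure := by
  obtain ⟨hGc, hGt2, hGtd, hGp⟩ := hG
  haveI := hGc; haveI := hGt2; haveI := hGtd
  set H : Subgroup G := (Subgroup.closure {y}).topologicalClosure with hH
  set K : Subgroup G := (Subgroup.closure {y ^ p}).topologicalClosure with hK
  have hyH : y ∈ H := Subgroup.le_topologicalClosure _ (Subgroup.subset_closure rfl)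
  haveI : CompactSpace ↥H := isCompact_iff_compactSpace.mp
    ((Subgroup.closure ({y} : Set G)).isClosed_topologicalClosure.isCompact)
  have hcommH : ∀ a ∈ H, ∀ b ∈ H, a * b = b * a := by
    intro a ha b hb
    refine myComm_topClosure ?_ ha hb
    intro u hu v hv
    rw [Set.mem_singleton_iff] at hu hv
    rw [hu, hv]
  have hcommP : ∀ a b : ↥H, a * b = b * a := fun a b =>
    Subtype.ext (hcommH a a.2 b b.2)
  have hnormal : ∀ M : Subgroup ↥H, M.Normal := fun M =>
    ⟨fun n hn g => by simpa [hcommP g n, mul_assoc] using hn⟩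
  have hKH : K ≤ H := Subgroup.topologicalClosure_minimal _
    ((Subgroup.closure_le _).mpr (by simp [Set.singleton_subset_iff, pow_mem hyH]))
    (Subgroup.closure ({y} : Set G)).isClosed_topologicalClosure
  have hpowK : ∀ g ∈ H, g ^ p ∈ K := by
    intro g hg
    have hmap : (fun z : G => z ^ p) '' ((Subgroup.closure {y} : Subgroup G) : Set G)
        ⊆ ((Subgroup.closure {y ^ p} : Subgroup G) : Set G) := by
      rintro _ ⟨w, hw, rfl⟩
      rw [SetLike.mem_coe, ← Subgroup.zpowers_eq_closure] at hw
      rw [SetLike.mem_coe, ← Subgroup.zpowers_eq_closure]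
      obtain ⟨k, rfl⟩ := hw
      have hzp : (y ^ k) ^ p = (y ^ p) ^ k := by
        rw [← zpow_natCast (y ^ k) p, ← zpow_mul, mul_comm, zpow_mul, zpow_natCast]
      exact ⟨k, hzp.symm⟩
    have h1 : g ^ p ∈ (fun z : G => z ^ p) ''
        _root_.closure ((Subgroup.closure {y} : Subgroup G) : Set G) := ⟨g, hg, rfl⟩
    have h2 := image_closure_subset_closure_image (continuous_pow p) h1
    have h3 : g ^ p ∈ _root_.closure ((Subgroup.closure {y ^ p} : Subgroup G) : Set G) :=
      closure_mono hmap h2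
    exact h3
  set 𝓜 : Set (Subgroup ↥H) := {M : Subgroup ↥H | IsOpen (M : Set ↥H) ∧ IsCoatom M} with h𝓜
  set N : Subgroup ↥H := ⨅ M ∈ 𝓜, M with hNdef
  set yhat : ↥H := ⟨y, hyH⟩ with hyhat
  have claim1 : ∀ M ∈ 𝓜, yhat ^ p ∈ M := by
    intro M hM
    obtain ⟨hMO, hMco⟩ := hM
    haveI := hnormal M
    haveI : Finite (↥H ⧸ M) := M.quotient_finite_of_isOpen hMO
    set g : ↥H ⧸ M := QuotientGroup.mk' M yhat with hg
    obtain ⟨W, hWO, hWpre⟩ := isOpen_induced_iff.mp hMO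
    have h1W : (1 : G) ∈ W := by
      have h1M : (1 : ↥H) ∈ (M : Set ↥H) := M.one_mem
      rw [← hWpre] at h1M
      exact h1M
    obtain ⟨V, hVN, hVO, hVW⟩ := myExists_openNormal_subset hWO h1W
    haveI := hVN
    set φ : ↥H →* G ⧸ V := (QuotientGroup.mk' V).comp H.subtype with hφ
    have hker : φ.ker ≤ M := by
      intro w hw
      have hwV : (w : G) ∈ V := (QuotientGroup.eq_one_iff _).mp hw
      have hwW : (w : G) ∈ W := hVW hwV
      show w ∈ (M : Set ↥H)
      rw [← hWpre]
      exact hwW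
    haveI : Finite (G ⧸ V) := V.quotient_finite_of_isOpen hVO
    obtain ⟨n, hn⟩ := hGp V hVN hVO
    have hdvd : M.index ∣ p ^ n := by
      calc M.index ∣ φ.ker.index := Subgroup.index_dvd_of_le hker
        _ = Nat.card φ.range := Subgroup.index_ker φ
        _ ∣ Nat.card (G ⧸ V) := Subgroup.card_subgroup_dvd_card _
        _ = V.index := (Subgroup.index_eq_card V).symm
        _ = p ^ n := hn
    obtain ⟨k, hk, hMk⟩ := (Nat.dvd_prime_pow hp).mp hdvd
    have hgen : ∀ q : ↥H ⧸ M, q ∈ zpowers g := by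
      intro q
      obtain ⟨hh, rfl⟩ := QuotientGroup.mk'_surjective M q
      have hcl : hh ∈ _root_.closure ((zpowers yhat : Subgroup ↥H) : Set ↥H) := by
        rw [closure_subtype]
        have himg : (Subtype.val '' ((zpowers yhat : Subgroup ↥H) : Set ↥H))
            = ((zpowers y : Subgroup G) : Set G) := by
          ext w
          constructor
          · rintro ⟨v, hv, rfl⟩
            obtain ⟨k', hk'⟩ := Subgroup.mem_zpowers_iff.mp hv
            exact Subgroup.mem_zpowers_iff.mpr ⟨k', by rw [← hk']; simp [hyhat]⟩
          · intro hw
            obtain ⟨k', hk'⟩ := Subgroup.mem_zpowers_iff.mp hw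
            exact ⟨yhat ^ k', Subgroup.mem_zpowers_iff.mpr ⟨k', rfl⟩, by rw [← hk']; simp [hyhat]⟩
        rw [himg, Subgroup.zpowers_eq_closure]
        exact hh.2
      set O : Set ↥H := (fun w : ↥H => hh⁻¹ * w) ⁻¹' (M : Set ↥H) with hO
      have hOopen : IsOpen O := hMO.preimage (continuous_const.mul continuous_id)
      have hhO : hh ∈ O := by
        show hh⁻¹ * hh ∈ M
        rw [inv_mul_cancel]
        exact M.one_mem
      obtain ⟨w, hwO, hws⟩ := mem_closure_iff.mp hcl O hOopen hhO
      obtain ⟨k', hk'⟩ := Subgroup.mem_zpowers_iff.mp hws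
      have : QuotientGroup.mk' M hh = QuotientGroup.mk' M w := by
        apply (QuotientGroup.eq ).mpr
        exact hwO
      rw [this, ← hk', map_zpow]
      exact Subgroup.zpow_mem _ (Subgroup.mem_zpowers g) k'
    set Z : Subgroup (↥H ⧸ M) := zpowers (g ^ p) with hZ
    set N' : Subgroup ↥H := Z.comap (QuotientGroup.mk' M) with hN'
    have hMN' : M ≤ N' := by
      intro m hm
      show QuotientGroup.mk' M m ∈ Z
      have : QuotientGroup.mk' M m = 1 := (QuotientGroup.eq_one_iff m).mpr hm
      rw [this]
      exact Z.one_mem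
    rcases hMN'.lt_or_eq with hlt | heq
    · exfalso
      have hNtop : N' = ⊤ := hMco.2 _ hlt
      have hZtop : Z = ⊤ := by
        rw [eq_top_iff']
        intro q
        obtain ⟨w, rfl⟩ := QuotientGroup.mk'_surjective M q
        have hw : w ∈ N' := hNtop ▸ Subgroup.mem_top w
        exact hw
      haveI : Fintype (↥H ⧸ M) := Fintype.ofFinite _
      have hcardQ : Nat.card (↥H ⧸ M) = p ^ k := by
        rw [← Subgroup.index_eq_card, hMk]
      have hk1 : k ≠ 0 := by
        rintro rfl
        refine hMco.1 (Subgroup.index_eq_one.mp ?_)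
        rw [hMk, pow_zero]
      have hko : orderOf g = p ^ k := by
        rw [orderOf_eq_card_of_forall_mem_zpowers hgen]
        exact hcardQ
      have hcardZ : Nat.card Z = p ^ k := by
        rw [hZtop]
        rw [← hcardQ]
        exact Subgroup.card_top
      have hord : orderOf (g ^ p) = p ^ k / p := by
        rw [orderOf_pow' g hp.ne_zero, hko, Nat.gcd_eq_right (dvd_pow_self p hk1)]
      have heq2 : p ^ k = p ^ k / p := by
        conv_lhs => rw [← hcardZ]
        rw [Nat.card_zpowers, hord]
      have hlt2 : p ^ k / p < p ^ k := Nat.div_lt_self (pow_pos hp.pos k) hp.one_lt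
      omega
    · show yhat ^ p ∈ M
      rw [heq]
      show QuotientGroup.mk' M (yhat ^ p) ∈ Z
      rw [map_pow]
      exact Subgroup.mem_zpowers _
  have hNyp : yhat ^ p ∈ N := by
    rw [hNdef, Subgroup.mem_iInf]
    intro M
    rw [Subgroup.mem_iInf]
    intro hM
    exact claim1 M hM
  have hNclosed : IsClosed ((N : Set ↥H)) := by
    have hNset : (N : Set ↥H) = ⋂ M ∈ 𝓜, (M : Set ↥H) := by
      rw [hNdef]
      simp only [Subgroup.coe_iInf]
    rw [hNset]
    exact isClosed_biInter fun M hM => M.isClosed_of_isOpen hM.1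
  have hmapclosed : IsClosed ((N.map H.subtype : Subgroup G) : Set G) := by
    have hc : IsCompact (Subtype.val '' (N : Set ↥H)) :=
      (hNclosed.isCompact).image continuous_subtype_val
    have hset : ((N.map H.subtype : Subgroup G) : Set G) = Subtype.val '' (N : Set ↥H) := by
      rw [Subgroup.coe_map, Subgroup.coe_subtype]
    rw [hset]
    exact hc.isClosed
  have hfr : frattiniOf H = N.map H.subtype := rfl
  rw [hfr]
  apply le_antisymm
  · rintro w hw
    obtain ⟨h, hhN, rfl⟩ := Subgroup.mem_map.mp hw
    by_contra hwK
    set K' : Subgroup ↥H := K.comap H.subtype with hK'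
    have hK'c : IsClosed (K' : Set ↥H) :=
      (Subgroup.closure ({y ^ p} : Set G)).isClosed_topologicalClosure.preimage continuous_subtype_val
    have hhK' : h ∉ K' := hwK
    obtain ⟨U, hUO, hK'U, hhU⟩ := mySeparation hK'c hhK'
    have hpowU : ∀ t : ↥H, t ^ p ∈ U := by
      intro t
      refine hK'U ?_
      show ((t ^ p : ↥H) : G) ∈ K
      rw [SubmonoidClass.coe_pow]
      exact hpowK t t.2
    obtain ⟨M, hMO, hMco, hhM⟩ := myExists_coatom hcommP hUO hhU hp hpowU
    have hhM' : h ∈ M := by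
      rw [hNdef, Subgroup.mem_iInf] at hhN
      have := hhN M
      rw [Subgroup.mem_iInf] at this
      exact this ⟨hMO, hMco⟩
    exact hhM hhM'
  · refine Subgroup.topologicalClosure_minimal _ ((Subgroup.closure_le _).mpr ?_) hmapclosed
    rw [Set.singleton_subset_iff]
    exact Subgroup.mem_map.mpr ⟨yhat ^ p, hNyp, by simp [hyhat]⟩

/-- Every maximal abelian closed subgroup of a Frattini-injective pro-`p`
group is isolated. -/
theorem stmt_2 {p : ℕ} (hp : p.Prime) (G : Type*) [Group G] [TopologicalSpace G]
    [IsTopologicalGroup G] (hG : IsProPGroup p G) (hFI : FrattiniInjective G)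
    (A : Subgroup G) (hAc : IsClosed (A : Set G))
    (hAab : ∀ a ∈ A, ∀ b ∈ A, a * b = b * a)
    (hAmax : ∀ B : Subgroup G, (∀ a ∈ B, ∀ b ∈ B, a * b = b * a) → A ≤ B → B = A)
    (x : G) (hx : x ^ p ∈ A) : x ∈ A := by
  have hT : ∀ u v : G, u ^ p = v ^ p →
      (Subgroup.closure {u}).topologicalClosure = (Subgroup.closure {v}).topologicalClosure := by
    intro u v huv
    apply hFI _ _ (Subgroup.isClosed_topologicalClosure _) (Subgroup.isClosed_topologicalClosure _)
      ⟨{u}, by simp⟩ ⟨{v}, by simp⟩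
    rw [myFrattini_procyclic hp hG u, myFrattini_procyclic hp hG v, huv]
  have hpow1 : ∀ w : G, w ^ p = 1 → w = 1 := by
    intro w hw
    haveI := hG.2.1
    have h1 : (Subgroup.closure {w}).topologicalClosure
        = (Subgroup.closure {(1 : G)}).topologicalClosure := hT w 1 (by rw [hw, one_pow])
    have h2 : (Subgroup.closure ({(1 : G)} : Set G)).topologicalClosure = ⊥ := by
      rw [Subgroup.closure_singleton_one]
      refine le_antisymm (Subgroup.topologicalClosure_minimal _ le_rfl ?_)
        (Subgroup.le_topologicalClosure _)
      rw [Subgroup.coe_bot]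
      exact isClosed_singleton
    have hwmem : w ∈ (Subgroup.closure {w}).topologicalClosure :=
      Subgroup.le_topologicalClosure _ (Subgroup.subset_closure rfl)
    rw [h1, h2] at hwmem
    exact Subgroup.mem_bot.mp hwmem
  have hax : ∀ a ∈ A, a * x = x * a := by
    intro a ha
    have hup : (a * x * a⁻¹) ^ p = x ^ p := by
      rw [conj_pow]
      rw [hAab a ha (x ^ p) hx, mul_assoc, mul_inv_cancel, mul_one]
    have hTeq := hT (a * x * a⁻¹) x hup
    have huT : a * x * a⁻¹ ∈ (Subgroup.closure {x}).topologicalClosure := by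
      rw [← hTeq]
      exact Subgroup.le_topologicalClosure _ (Subgroup.subset_closure rfl)
    have hxT : x ∈ (Subgroup.closure {x}).topologicalClosure :=
      Subgroup.le_topologicalClosure _ (Subgroup.subset_closure rfl)
    haveI := hG.2.1
    have hcomm : Commute (a * x * a⁻¹) x := by
      refine myComm_topClosure ?_ huT hxT
      intro c hc d hd
      rw [Set.mem_singleton_iff] at hc hd
      rw [hc, hd]
    have hone : ((a * x * a⁻¹) * x⁻¹) ^ p = 1 := by
      rw [(hcomm.inv_right).mul_pow, hup, inv_pow, mul_inv_cancel]
    have hux : a * x * a⁻¹ = x := by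
      have := hpow1 _ hone
      rwa [mul_inv_eq_one] at this
    calc a * x = (a * x * a⁻¹) * a := by group
      _ = x * a := by rw [hux]
  have hBab : ∀ b₁ ∈ Subgroup.closure ((A : Set G) ∪ {x}),
      ∀ b₂ ∈ Subgroup.closure ((A : Set G) ∪ {x}), b₁ * b₂ = b₂ * b₁ := by
    intro b₁ h₁ b₂ h₂
    refine myComm_closure ?_ h₁ h₂
    rintro c (hc | hc) d (hd | hd)
    · exact hAab c hc d hd
    · rw [Set.mem_singleton_iff] at hd
      rw [hd]
      exact hax c hc
    · rw [Set.mem_singleton_iff] at hc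
      rw [hc]
      exact (hax d hd).symm
    · rw [Set.mem_singleton_iff] at hc hd
      rw [hc, hd]
  have hAB : A ≤ Subgroup.closure ((A : Set G) ∪ {x}) := fun g hg =>
    Subgroup.subset_closure (Or.inl hg)
  have hBA := hAmax _ hBab hAB
  have hxB : x ∈ Subgroup.closure ((A : Set G) ∪ {x}) := Subgroup.subset_closure (Or.inr rfl)
  rwa [hBA] at hxB
end

section
/- Let G be a Frattini-injective pro-p group. If G is virtually abelian (contains an abelian open subgroup of finite index), then G is abelian. -/
set_option linter.unusedSectionVars false

namespace StmtAux

open Subgroup Topology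

variable {p : ℕ} {G : Type*} [Group G] [TopologicalSpace G] [IsTopologicalGroup G]

/-- The closed procyclic subgroup generated by `x`. -/
noncomputable def cyc (x : G) : Subgroup G := (Subgroup.closure {x}).topologicalClosure

lemma cyc_closed (x : G) : IsClosed ((cyc x : Subgroup G) : Set G) :=
  Subgroup.isClosed_topologicalClosure _

lemma mem_cyc (x : G) : x ∈ cyc x :=
  Subgroup.le_topologicalClosure _ (Subgroup.subset_closure (Set.mem_singleton x))

lemma topfg_cyc (x : G) : TopFG (cyc x) := ⟨{x}, by simp [cyc]⟩

lemma isClosed_centralizer [T2Space G] (s : Set G) :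
    IsClosed ((Subgroup.centralizer s : Subgroup G) : Set G) := by
  have h : ((Subgroup.centralizer s : Subgroup G) : Set G) = ⋂ g ∈ s, {h : G | g * h = h * g} := by
    ext a
    simp only [SetLike.mem_coe, Subgroup.mem_centralizer_iff, Set.mem_iInter, Set.mem_setOf_eq]
  rw [h]
  exact isClosed_biInter fun g _ =>
    isClosed_eq (continuous_const.mul continuous_id) (continuous_id.mul continuous_const)

lemma cyc_comm [T2Space G] (x : G) : ∀ a ∈ cyc x, ∀ b ∈ cyc x, a * b = b * a := by
  have hmin : ∀ s : Set G, x ∈ Subgroup.centralizer s → cyc x ≤ Subgroup.centralizer s := by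
    intro s hx
    exact Subgroup.topologicalClosure_minimal _
      ((Subgroup.closure_le _).mpr (by simpa using hx)) (isClosed_centralizer s)
  have hx : ∀ a ∈ cyc x, a * x = x * a := by
    intro a ha
    have hxc : x ∈ Subgroup.centralizer {x} := by
      rw [Subgroup.mem_centralizer_iff]; rintro g rfl; rfl
    have := hmin {x} hxc ha
    rw [Subgroup.mem_centralizer_iff] at this
    exact (this x rfl).symm
  intro a ha b hb
  have hxc : x ∈ Subgroup.centralizer {a} := by
    rw [Subgroup.mem_centralizer_iff]
    intro g hg
    rw [Set.mem_singleton_iff] at hg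
    rw [hg]
    exact hx a ha
  have := hmin {a} hxc hb
  rw [Subgroup.mem_centralizer_iff] at this
  exact this a rfl

lemma cyc_pow_mem (n : ℕ) {x a : G} (ha : a ∈ cyc x) : a ^ n ∈ cyc (x ^ n) := by
  have hcont : Continuous fun g : G => g ^ n := continuous_pow n
  have h1 : a ∈ _root_.closure ((Subgroup.closure {x} : Subgroup G) : Set G) := by
    rwa [← Subgroup.topologicalClosure_coe]
  have h2 : a ^ n ∈ _root_.closure ((fun g : G => g ^ n) '' (Subgroup.closure {x} : Subgroup G)) :=
    image_closure_subset_closure_image hcont (Set.mem_image_of_mem _ h1)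
  have h3 : ((fun g : G => g ^ n) '' (Subgroup.closure {x} : Subgroup G)) ⊆
      ((Subgroup.closure {x ^ n} : Subgroup G) : Set G) := by
    rintro _ ⟨g, hg, rfl⟩
    obtain ⟨m, rfl⟩ := Subgroup.mem_closure_singleton.mp hg
    refine SetLike.mem_coe.mpr (Subgroup.mem_closure_singleton.mpr ⟨m, ?_⟩)
    show (x ^ n) ^ m = (x ^ m) ^ n
    rw [← zpow_natCast x n, ← zpow_mul, ← zpow_natCast (x ^ m) n, ← zpow_mul, mul_comm]
  have := _root_.closure_mono h3 h2
  rwa [← Subgroup.topologicalClosure_coe] at this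


lemma index_isPPow (hp : p.Prime) (hG : IsProPGroup p G) (H : Subgroup G)
    (M : Subgroup ↥H) (hM : IsOpen ((M : Subgroup ↥H) : Set ↥H)) : ∃ k, M.index = p ^ k := by
  obtain ⟨hc, ht, htd, hidx⟩ := hG
  obtain ⟨V, hVopen, hVM⟩ := isOpen_induced_iff.mp hM
  have h1V : (1 : G) ∈ V := by
    have h1 : ((1 : ↥H) : G) ∈ V := by
      have : (1 : ↥H) ∈ Subtype.val ⁻¹' V := hVM.symm ▸ M.one_mem
      exact this
    simpa using h1
  obtain ⟨C, hCclopen, h1C, hCV⟩ := compact_exists_isClopen_in_isOpen hVopen h1V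
  obtain ⟨W, hW⟩ := IsTopologicalGroup.exist_openNormalSubgroup_sub_clopen_nhds_of_one hCclopen h1C
  have hle : (W : Subgroup G).subgroupOf H ≤ M := by
    intro h hh
    have hhV : (h : G) ∈ V := hCV (hW (Subgroup.mem_subgroupOf.mp hh))
    have : h ∈ Subtype.val ⁻¹' V := hhV
    rwa [hVM] at this
  obtain ⟨n, hn⟩ := hidx W W.isNormal' W.toOpenSubgroup.isOpen
  have h1 : M.index ∣ ((W : Subgroup G).subgroupOf H).index := Subgroup.index_dvd_of_le hle
  have h2 : (W : Subgroup G).relIndex H ∣ (W : Subgroup G).index :=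
    Subgroup.relIndex_dvd_index_of_normal _ _
  have h3 : M.index ∣ p ^ n := by
    rw [← hn]
    exact dvd_trans h1 h2
  obtain ⟨k, _, hk⟩ := (Nat.dvd_prime_pow hp).mp h3
  exact ⟨k, hk⟩


section Frattini

variable (hp : p.Prime) (hG : IsProPGroup p G)

/-- In an open coatom of a closed abelian subgroup, all `p`-th powers lie. -/
lemma pow_mem_coatom (hp : p.Prime) (hG : IsProPGroup p G) (H : Subgroup G)
    (hHclosed : IsClosed (H : Set G)) (hcommH : ∀ a b : ↥H, a * b = b * a)
    (M : Subgroup ↥H) (hMopen : IsOpen ((M : Subgroup ↥H) : Set ↥H))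
    (hMcoatom : IsCoatom M) : ∀ h : ↥H, h ^ p ∈ M := by
  obtain ⟨hc, ht, htd, hidx⟩ := hG
  haveI : CompactSpace ↥H := isCompact_iff_compactSpace.mp (hHclosed.isCompact)
  haveI : M.Normal := by
    constructor
    intro m hm k
    have : k * m * k⁻¹ = m := by
      rw [mul_inv_eq_iff_eq_mul, hcommH]
    rwa [this]
  haveI : Finite (↥H ⧸ M) := M.quotient_finite_of_isOpen hMopen
  obtain ⟨k, hk⟩ := index_isPPow hp ⟨hc, ht, htd, hidx⟩ H M hMopen
  have hk0 : k ≠ 0 := by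
    intro h
    rw [h, pow_zero] at hk
    exact hMcoatom.1 (Subgroup.index_eq_one.mp hk)
  intro h
  by_contra hxpM
  have hQcomm : ∀ a b : ↥H ⧸ M, a * b = b * a := by
    intro a b
    induction a using QuotientGroup.induction_on with
    | H a =>
    induction b using QuotientGroup.induction_on with
    | H b =>
    rw [← QuotientGroup.mk_mul, ← QuotientGroup.mk_mul, hcommH]
  haveI : Fact p.Prime := ⟨hp⟩
  haveI : Fintype (↥H ⧸ M) := Fintype.ofFinite _
  have hcard : p ∣ Fintype.card (↥H ⧸ M) := by
    have : Fintype.card (↥H ⧸ M) = M.index := by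
      rw [Subgroup.index_eq_card, Nat.card_eq_fintype_card]
    rw [this, hk]
    exact dvd_pow_self p hk0
  obtain ⟨q₀, hq₀⟩ := exists_prime_orderOf_dvd_card p hcard
  have hninj : ¬ Function.Injective (fun q : ↥H ⧸ M => q ^ p) := by
    intro hinj
    have h1 : q₀ = 1 := hinj (by
      show q₀ ^ p = 1 ^ p
      rw [one_pow, ← hq₀, pow_orderOf_eq_one])
    rw [h1, orderOf_one] at hq₀
    exact hp.one_lt.ne hq₀
  have hnsurj : ¬ Function.Surjective (fun q : ↥H ⧸ M => q ^ p) :=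
    fun hs => hninj (Finite.injective_iff_surjective.mpr hs)
  obtain ⟨q, hq⟩ := not_forall.mp hnsurj
  let S' : Subgroup (↥H ⧸ M) :=
    { carrier := Set.range (fun q : ↥H ⧸ M => q ^ p)
      one_mem' := ⟨1, one_pow p⟩
      mul_mem' := by
        rintro _ _ ⟨r, rfl⟩ ⟨s, rfl⟩
        refine ⟨r * s, ?_⟩
        show (r * s) ^ p = r ^ p * s ^ p
        rw [Commute.mul_pow (hQcomm r s)]
      inv_mem' := by
        rintro _ ⟨r, rfl⟩
        refine ⟨r⁻¹, ?_⟩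
        show r⁻¹ ^ p = (r ^ p)⁻¹
        rw [inv_pow] }
  let T : Subgroup ↥H := S'.comap (QuotientGroup.mk' M)
  have hMT : M ≤ T := by
    intro m hm
    show QuotientGroup.mk' M m ∈ S'
    have h1 : QuotientGroup.mk' M m = 1 := (QuotientGroup.eq_one_iff m).mpr hm
    rw [h1]
    exact S'.one_mem
  have hxT : h ^ p ∈ T := by
    show QuotientGroup.mk' M (h ^ p) ∈ S'
    rw [map_pow]
    exact ⟨QuotientGroup.mk' M h, rfl⟩
  have hMT' : M < T := lt_of_le_of_ne hMT (fun he => hxpM (by rw [he]; exact hxT))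
  have hTtop : T = ⊤ := hMcoatom.2 T hMT'
  obtain ⟨r, hr⟩ := QuotientGroup.mk'_surjective M q
  have hrT : r ∈ T := hTtop ▸ Subgroup.mem_top r
  have hrS : QuotientGroup.mk' M r ∈ S' := hrT
  rw [hr] at hrS
  exact hq hrS


lemma exp_subgroupOf (x : G) (h : ↥(cyc x : Subgroup G)) :
    h ^ p ∈ (cyc (x ^ p)).subgroupOf (cyc x) := by
  rw [Subgroup.mem_subgroupOf]
  have : ((h ^ p : ↥(cyc x : Subgroup G)) : G) = (h : G) ^ p := rfl
  rw [this]
  exact cyc_pow_mem p h.2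

lemma subgroupOf_closed (x : G) :
    IsClosed (((cyc (x ^ p)).subgroupOf (cyc x) : Subgroup ↥(cyc x : Subgroup G)) : Set ↥(cyc x : Subgroup G)) := by
  have h : (((cyc (x ^ p)).subgroupOf (cyc x) : Subgroup ↥(cyc x : Subgroup G)) : Set ↥(cyc x : Subgroup G)) =
      Subtype.val ⁻¹' ((cyc (x ^ p) : Subgroup G) : Set G) := by
    ext a
    simp [Subgroup.mem_subgroupOf]
  rw [h]
  exact (cyc_closed (x ^ p)).preimage continuous_subtype_val

lemma decomp (hpp : 0 < p) (x : G) (h : ↥(cyc x : Subgroup G)) :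
    ∃ i : ℕ, i < p ∧
      ((⟨x, mem_cyc x⟩ : ↥(cyc x : Subgroup G)) ^ i)⁻¹ * h ∈ (cyc (x ^ p)).subgroupOf (cyc x) := by
  set xb : ↥(cyc x : Subgroup G) := ⟨x, mem_cyc x⟩ with hxb
  set M₀ : Subgroup ↥(cyc x : Subgroup G) := (cyc (x ^ p)).subgroupOf (cyc x) with hM₀
  let F : Set ↥(cyc x : Subgroup G) :=
    ⋃ i ∈ Finset.range p, (fun g : ↥(cyc x : Subgroup G) => (xb ^ i)⁻¹ * g) ⁻¹' (M₀ : Set _)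
  have hFclosed : IsClosed F :=
    Set.Finite.isClosed_biUnion (Finset.finite_toSet _) fun i _ =>
      (subgroupOf_closed x).preimage (continuous_const.mul continuous_id)
  have hFgen : ∀ m : ℤ, xb ^ m ∈ F := by
    intro m
    have hp0 : ((p : ℤ)) ≠ 0 := by exact_mod_cast hpp.ne'
    have h1 : 0 ≤ m % p := Int.emod_nonneg m hp0
    have h2 : m % p < p := Int.emod_lt_of_pos m (by exact_mod_cast hpp)
    refine Set.mem_iUnion₂.mpr ⟨(m % p).toNat, Finset.mem_range.mpr (by omega), ?_⟩
    show (xb ^ (m % p).toNat)⁻¹ * xb ^ m ∈ M₀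
    have h3 : (xb ^ (m % p).toNat)⁻¹ * xb ^ m = (xb ^ (m / p)) ^ p := by
      rw [← zpow_natCast xb (m % p).toNat, ← zpow_neg, ← zpow_add, ← zpow_natCast (xb ^ (m / p)) p,
        ← zpow_mul]
      congr 1
      have h4 : ((m % p).toNat : ℤ) = m % p := Int.toNat_of_nonneg h1
      rw [h4, Int.emod_def]
      ring
    rw [h3]
    exact exp_subgroupOf x _
  have hsub : ((Subgroup.closure {xb} : Subgroup ↥(cyc x : Subgroup G)) : Set _) ⊆ F := by
    intro g hg
    obtain ⟨m, rfl⟩ := Subgroup.mem_closure_singleton.mp hg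
    exact hFgen m
  have hdense : ∀ g : ↥(cyc x : Subgroup G),
      g ∈ _root_.closure ((Subgroup.closure {xb} : Subgroup ↥(cyc x : Subgroup G)) : Set _) := by
    intro g
    rw [closure_subtype]
    have himg : Subtype.val '' ((Subgroup.closure {xb} : Subgroup ↥(cyc x : Subgroup G)) : Set ↥(cyc x : Subgroup G)) =
        ((Subgroup.closure {x} : Subgroup G) : Set G) := by
      have h5 : (Subgroup.closure {xb}).map (cyc x).subtype = Subgroup.closure {x} := by
        rw [MonoidHom.map_closure]
        congr 1
        rw [Set.image_singleton]
        rfl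
      rw [← h5, Subgroup.coe_map]
      rfl
    rw [himg]
    rw [← Subgroup.topologicalClosure_coe]
    exact g.2
  have hFuniv : ∀ g : ↥(cyc x : Subgroup G), g ∈ F := fun g =>
    (hFclosed.closure_subset_iff.mpr hsub) (hdense g)
  obtain ⟨i, hi, hmem⟩ := Set.mem_iUnion₂.mp (hFuniv h)
  exact ⟨i, Finset.mem_range.mp hi, hmem⟩

lemma subgroupOf_coatom (hp : p.Prime) (x : G)
    (hne : ¬ (cyc x : Subgroup G) ≤ cyc (x ^ p)) :
    IsOpen (((cyc (x ^ p)).subgroupOf (cyc x) : Subgroup ↥(cyc x : Subgroup G)) : Set ↥(cyc x : Subgroup G)) ∧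
      IsCoatom ((cyc (x ^ p)).subgroupOf (cyc x)) := by
  set xb : ↥(cyc x : Subgroup G) := ⟨x, mem_cyc x⟩ with hxb
  set M₀ : Subgroup ↥(cyc x : Subgroup G) := (cyc (x ^ p)).subgroupOf (cyc x) with hM₀
  have hnetop : M₀ ≠ ⊤ := by
    obtain ⟨h₀, h₀H, h₀P⟩ := SetLike.not_le_iff_exists.mp hne
    intro htop
    exact h₀P (Subgroup.mem_subgroupOf.mp (htop ▸ Subgroup.mem_top (⟨h₀, h₀H⟩ : ↥(cyc x : Subgroup G))))
  have hsurj : Function.Surjective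
      (fun i : Fin p => (QuotientGroup.mk (xb ^ (i : ℕ)) : ↥(cyc x : Subgroup G) ⧸ M₀)) := by
    intro c
    induction c using QuotientGroup.induction_on with
    | H h =>
    obtain ⟨i, hip, hm⟩ := decomp hp.pos x h
    exact ⟨⟨i, hip⟩, (QuotientGroup.eq (s := M₀)).mpr hm⟩
  haveI : Finite (↥(cyc x : Subgroup G) ⧸ M₀) := Finite.of_surjective _ hsurj
  haveI : M₀.FiniteIndex := M₀.finiteIndex_of_finite_quotient
  have hopen : IsOpen ((M₀ : Subgroup ↥(cyc x : Subgroup G)) : Set ↥(cyc x : Subgroup G)) :=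
    Subgroup.isOpen_of_isClosed_of_finiteIndex M₀ (subgroupOf_closed x)
  refine ⟨hopen, hnetop, ?_⟩
  intro Q hQ
  obtain ⟨q, hqQ, hqM⟩ := SetLike.exists_of_lt hQ
  obtain ⟨i, hip, hm⟩ := decomp hp.pos x q
  have hi0 : i ≠ 0 := by
    intro h
    rw [h, pow_zero, inv_one, one_mul] at hm
    exact hqM hm
  have hxbiQ : xb ^ i ∈ Q := by
    have h1 : xb ^ i = q * ((xb ^ i)⁻¹ * q)⁻¹ := by group
    rw [h1]
    exact Q.mul_mem hqQ (Q.inv_mem (hQ.le hm))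
  have hndvd : ¬ (p ∣ i) := by
    intro hd
    exact absurd (Nat.le_of_dvd (Nat.pos_of_ne_zero hi0) hd) (not_le.mpr hip)
  have hcop : Nat.gcd p i = 1 := (Nat.Prime.coprime_iff_not_dvd hp).mpr hndvd
  have hbez : (1 : ℤ) = p * Nat.gcdA p i + i * Nat.gcdB p i := by
    have := Nat.gcd_eq_gcd_ab p i
    rwa [hcop] at this
  have hxbQ : xb ∈ Q := by
    have h2 : xb = (xb ^ (p : ℤ)) ^ Nat.gcdA p i * (xb ^ (i : ℤ)) ^ Nat.gcdB p i := by
      rw [← zpow_mul, ← zpow_mul, ← zpow_add, ← hbez, zpow_one]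
    rw [h2]
    refine Q.mul_mem (Q.zpow_mem ?_ _) (Q.zpow_mem ?_ _)
    · rw [zpow_natCast]
      exact hQ.le (exp_subgroupOf x xb)
    · rw [zpow_natCast]
      exact hxbiQ
  rw [eq_top_iff]
  intro h _
  obtain ⟨j, _, hmj⟩ := decomp hp.pos x h
  have h3 : h = xb ^ j * ((xb ^ j)⁻¹ * h) := by group
  rw [h3]
  exact Q.mul_mem (Q.pow_mem hxbQ j) (hQ.le hmj)


lemma frattini_cyc (hp : p.Prime) (hG : IsProPGroup p G) (x : G) :
    frattiniOf (cyc x : Subgroup G) = cyc (x ^ p) := by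
  obtain ⟨hc, ht, htd, hidx⟩ := id hG
  have hxH : x ∈ cyc x := mem_cyc x
  have hPH : cyc (x ^ p) ≤ cyc x := by
    refine Subgroup.topologicalClosure_minimal _ ((Subgroup.closure_le _).mpr ?_) (cyc_closed x)
    intro y hy
    rw [Set.mem_singleton_iff] at hy
    rw [hy]
    exact SetLike.mem_coe.mpr ((cyc x).pow_mem hxH p)
  have hcommH : ∀ a b : ↥(cyc x : Subgroup G), a * b = b * a := fun a b =>
    Subtype.ext (cyc_comm x (a : G) a.2 (b : G) b.2)
  haveI : CompactSpace ↥(cyc x : Subgroup G) :=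
    isCompact_iff_compactSpace.mp ((cyc_closed x).isCompact)
  apply le_antisymm
  · by_cases hHP : (cyc x : Subgroup G) ≤ cyc (x ^ p)
    · exact le_trans (Subgroup.map_subtype_le _) hHP
    · have hco := subgroupOf_coatom hp x hHP
      have h1 : frattiniOf (cyc x : Subgroup G) ≤
          ((cyc (x ^ p)).subgroupOf (cyc x)).map (cyc x).subtype := by
        simp only [frattiniOf]
        apply Subgroup.map_mono
        exact iInf₂_le _ ⟨hco.1, hco.2⟩
      have h2 : ((cyc (x ^ p)).subgroupOf (cyc x)).map (cyc x).subtype = cyc (x ^ p) ⊓ cyc x :=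
        Subgroup.subgroupOf_map_subtype _ _
      rw [h2] at h1
      exact le_trans h1 inf_le_left
  · intro g hg
    have hgH : g ∈ cyc x := hPH hg
    simp only [frattiniOf]
    refine Subgroup.mem_map.mpr ⟨⟨g, hgH⟩, ?_, rfl⟩
    rw [Subgroup.mem_iInf]
    intro M
    rw [Subgroup.mem_iInf]
    intro hM
    obtain ⟨hMopen, hMcoatom⟩ := hM
    have hxp : (⟨x, hxH⟩ : ↥(cyc x : Subgroup G)) ^ p ∈ M :=
      pow_mem_coatom hp hG _ (cyc_closed x) hcommH M hMopen hMcoatom _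
    have hMclosedH : IsClosed ((M : Subgroup ↥(cyc x : Subgroup G)) : Set ↥(cyc x : Subgroup G)) :=
      Subgroup.isClosed_of_isOpen M hMopen
    have hM'closed : IsClosed ((M.map (cyc x).subtype : Subgroup G) : Set G) := by
      rw [Subgroup.coe_map]
      exact ((hMclosedH.isCompact).image
        (continuous_subtype_val : Continuous (Subtype.val : ↥(cyc x : Subgroup G) → G))).isClosed
    have hPM : cyc (x ^ p) ≤ M.map (cyc x).subtype := by
      refine Subgroup.topologicalClosure_minimal _ ((Subgroup.closure_le _).mpr ?_) hM'closed
      intro y hy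
      rw [Set.mem_singleton_iff] at hy
      rw [hy]
      exact SetLike.mem_coe.mpr ⟨_, hxp, rfl⟩
    obtain ⟨m, hmM, hmg⟩ := Subgroup.mem_map.mp (hPM hg)
    have hme : m = ⟨g, hgH⟩ := Subtype.ext hmg
    rwa [hme] at hmM

end Frattini


lemma cyc_one [T2Space G] : (cyc (1 : G) : Subgroup G) = ⊥ := by
  apply le_antisymm
  · refine Subgroup.topologicalClosure_minimal _ ?_ ?_
    · rw [Subgroup.closure_singleton_one]
    · rw [Subgroup.coe_bot]
      exact isClosed_singleton
  · exact bot_le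

lemma bot_closed [T2Space G] : IsClosed (((⊥ : Subgroup G)) : Set G) := by
  rw [Subgroup.coe_bot]
  exact isClosed_singleton

lemma topfg_bot [T2Space G] : TopFG (⊥ : Subgroup G) := by
  refine ⟨∅, ?_⟩
  rw [Finset.coe_empty, Subgroup.closure_empty]
  exact le_antisymm (Subgroup.topologicalClosure_minimal _ le_rfl bot_closed)
    (Subgroup.le_topologicalClosure _)

lemma frattini_bot : frattiniOf (⊥ : Subgroup G) = ⊥ :=
  le_antisymm (Subgroup.map_subtype_le _) bot_le

lemma torsion_free (hp : p.Prime) (hG : IsProPGroup p G) (hFI : FrattiniInjective G)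
    (x : G) (hx : x ^ p = 1) : x = 1 := by
  obtain ⟨hc, ht, htd, hidx⟩ := id hG
  have h1 : frattiniOf (cyc x : Subgroup G) = frattiniOf (⊥ : Subgroup G) := by
    rw [frattini_cyc hp hG x, hx, cyc_one, frattini_bot]
  have h2 : (cyc x : Subgroup G) = ⊥ :=
    hFI _ _ (cyc_closed x) bot_closed (topfg_cyc x) topfg_bot h1
  have h3 : x ∈ (⊥ : Subgroup G) := by
    rw [← h2]
    exact mem_cyc x
  exact Subgroup.mem_bot.mp h3

lemma proot (hp : p.Prime) (hG : IsProPGroup p G) (hFI : FrattiniInjective G)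
    (x y : G) (hxy : x ^ p = y ^ p) : x = y := by
  obtain ⟨hc, ht, htd, hidx⟩ := id hG
  have hK : (cyc x : Subgroup G) = cyc y :=
    hFI _ _ (cyc_closed x) (cyc_closed y) (topfg_cyc x) (topfg_cyc y)
      (by rw [frattini_cyc hp hG, frattini_cyc hp hG, hxy])
  have hyx : Commute x y := by
    have hy : y ∈ cyc x := by rw [hK]; exact mem_cyc y
    exact cyc_comm x x (mem_cyc x) y hy
  have h1 : (x⁻¹ * y) ^ p = 1 := by
    rw [(hyx.inv_left).mul_pow, inv_pow, hxy, inv_mul_cancel]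
  exact inv_mul_eq_one.mp (torsion_free hp hG hFI _ h1)

lemma prootq (hp : p.Prime) (hG : IsProPGroup p G) (hFI : FrattiniInjective G) :
    ∀ n : ℕ, ∀ x y : G, x ^ (p ^ n) = y ^ (p ^ n) → x = y := by
  intro n
  induction n with
  | zero => intro x y h; simpa using h
  | succ n ih =>
    intro x y h
    rw [pow_succ, pow_mul, pow_mul] at h
    exact ih x y (proot hp hG hFI _ _ h)

end StmtAux

/-- A virtually abelian Frattini-injective pro-`p` group is abelian. -/
theorem stmt_3 {p : ℕ} (hp : p.Prime) (G : Type*) [Group G] [TopologicalSpace G]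
    [IsTopologicalGroup G] (hG : IsProPGroup p G) (hFI : FrattiniInjective G)
    (hva : ∃ U : Subgroup G, IsOpen (U : Set G) ∧ U.index ≠ 0 ∧
      ∀ a ∈ U, ∀ b ∈ U, a * b = b * a) :
    ∀ a b : G, a * b = b * a := by
  obtain ⟨hc, ht, htd, hidx⟩ := id hG
  obtain ⟨U, hUopen, hUidx, hUcomm⟩ := hva
  set N := U.normalCore with hN
  haveI : U.FiniteIndex := ⟨hUidx⟩
  haveI : N.FiniteIndex := U.finiteIndex_normalCore
  have hUclosed : IsClosed (U : Set G) := Subgroup.isClosed_of_isOpen U hUopen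
  have hNclosed : IsClosed (N : Set G) := by
    have h : (N : Set G) = ⋂ b : G, (fun a => b * a * b⁻¹) ⁻¹' (U : Set G) := by
      ext a
      simp only [SetLike.mem_coe, Set.mem_iInter, Set.mem_preimage]
      rfl
    rw [h]
    exact isClosed_iInter fun b =>
      hUclosed.preimage ((continuous_const.mul continuous_id).mul continuous_const)
  have hNopen : IsOpen (N : Set G) := Subgroup.isOpen_of_isClosed_of_finiteIndex N hNclosed
  obtain ⟨n, hn⟩ := hidx N inferInstance hNopen
  have hinN : ∀ g : G, g ^ (p ^ n) ∈ N := fun g => by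
    rw [← hn]
    exact N.pow_index_mem g
  have hNcomm : ∀ a ∈ N, ∀ b ∈ N, a * b = b * a := fun a ha b hb =>
    hUcomm a (U.normalCore_le ha) b (U.normalCore_le hb)
  have hcentral : ∀ a ∈ N, ∀ g : G, a * g = g * a := by
    intro a ha g
    have h1 : (a * g * a⁻¹) ^ (p ^ n) = g ^ (p ^ n) := by
      rw [conj_pow]
      have h2 : a * g ^ (p ^ n) = g ^ (p ^ n) * a := hNcomm a ha _ (hinN g)
      rw [h2, mul_assoc, mul_inv_cancel, mul_one]
    have h3 : a * g * a⁻¹ = g := StmtAux.prootq hp hG hFI n _ _ h1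
    calc a * g = (a * g * a⁻¹) * a := by group
      _ = g * a := by rw [h3]
  intro a b
  have h1 : (b * a * b⁻¹) ^ (p ^ n) = a ^ (p ^ n) := by
    rw [conj_pow]
    have h2 : a ^ (p ^ n) * b⁻¹ = b⁻¹ * a ^ (p ^ n) := hcentral _ (hinN a) b⁻¹
    rw [mul_assoc, h2, ← mul_assoc, mul_inv_cancel, one_mul]
  have h3 : b * a * b⁻¹ = a := StmtAux.prootq hp hG hFI n _ _ h1
  have h4 : b * a = a * b := by
    calc b * a = (b * a * b⁻¹) * b := by group
      _ = a * b := by rw [h3]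
  exact h4.symm
end

section
/- Let G be a Frattini-injective pro-p group. If x^α = y^α for x, y ∈ G and a nonzero p-adic integer α, then x = y (unique extraction of roots). -/
/-- `y = x ^ α` for a `p`-adic integer `α`: `y` is the limit of `x ^ n` as the natural
number `n` tends to `α` in `ℤ_[p]`. -/
def IsPadicPow (p : ℕ) [Fact p.Prime] {G : Type*} [Group G] [TopologicalSpace G]
    (x : G) (α : ℤ_[p]) (y : G) : Prop :=
  Filter.Tendsto (fun n : ℕ => x ^ n)
    (Filter.comap (fun n : ℕ => (n : ℤ_[p])) (nhds α)) (nhds y)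


set_option linter.unusedSectionVars false
set_option maxHeartbeats 1000000

section AuxProofs

open Pointwise

variable {p : ℕ} [Fact p.Prime] {G : Type*} [Group G] [TopologicalSpace G] [IsTopologicalGroup G]

theorem pow_coprime_mem {H : Type*} [Group H] {A : Subgroup H} {g : H} {a b : ℕ}
    (h : Nat.gcd a b = 1) (ha : g ^ a ∈ A) (hb : g ^ b ∈ A) : g ∈ A := by
  have hb' : (1 : ℤ) = (a : ℤ) * Nat.gcdA a b + (b : ℤ) * Nat.gcdB a b := by
    have := Nat.gcd_eq_gcd_ab a b
    rw [h] at this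
    exact_mod_cast this
  have hg : g = (g ^ a) ^ Nat.gcdA a b * (g ^ b) ^ Nat.gcdB a b := by
    calc g = g ^ (1 : ℤ) := (zpow_one g).symm
    _ = g ^ ((a : ℤ) * Nat.gcdA a b + (b : ℤ) * Nat.gcdB a b) := by rw [← hb']
    _ = (g ^ a) ^ Nat.gcdA a b * (g ^ b) ^ Nat.gcdB a b := by
        rw [zpow_add, zpow_mul, zpow_mul, zpow_natCast, zpow_natCast]
  rw [hg]
  exact A.mul_mem (A.zpow_mem ha _) (A.zpow_mem hb _)

/-- Bezout membership: coprime integer powers. -/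

theorem zpow_coprime_mem {H : Type*} [Group H] {A : Subgroup H} {g : H} {a b : ℤ}
    (h : IsCoprime a b) (ha : g ^ a ∈ A) (hb : g ^ b ∈ A) : g ∈ A := by
  obtain ⟨u, v, huv⟩ := h
  have hg : g = (g ^ a) ^ u * (g ^ b) ^ v := by
    calc g = g ^ (1 : ℤ) := (zpow_one g).symm
    _ = g ^ (u * a + v * b) := by rw [huv]
    _ = (g ^ a) ^ u * (g ^ b) ^ v := by
        rw [zpow_add, mul_comm u a, mul_comm v b, zpow_mul, zpow_mul]
  rw [hg]
  exact A.mul_mem (A.zpow_mem ha _) (A.zpow_mem hb _)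

/-- If `c` has `p`-power order and `c ^ (p * j) = c`, then `c = 1`. -/

theorem eq_one_of_ppow {Q : Type*} [Group Q] {c : Q} {e : ℕ} (hord : orderOf c ∣ p ^ e) {j : ℤ}
    (hc : c ^ ((p : ℤ) * j) = c) : c = 1 := by
  have h1 : c ^ ((p : ℤ) * j - 1) = 1 := by
    rw [zpow_sub, hc, zpow_one, mul_inv_cancel]
  have h2 : (orderOf c : ℤ) ∣ (p : ℤ) * j - 1 := orderOf_dvd_iff_zpow_eq_one.mpr h1
  obtain ⟨t, _, hot⟩ := (Nat.dvd_prime_pow (Fact.out : p.Prime)).mp hord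
  rcases Nat.eq_zero_or_pos t with ht | ht
  · rw [ht, pow_zero] at hot
    exact orderOf_eq_one_iff.mp hot
  · exfalso
    have hpdvd : (p : ℤ) ∣ (orderOf c : ℤ) := by
      rw [hot]
      exact_mod_cast dvd_pow_self (p : ℤ) ht.ne'
    have hp1 : (p : ℤ) ∣ 1 := by
      have := dvd_sub (dvd_mul_right (p : ℤ) j) (hpdvd.trans h2)
      simpa using this
    have := Int.le_of_dvd one_pos hp1
    have h2p : 2 ≤ p := (Fact.out : p.Prime).two_le
    omega

/-- Inside every open neighbourhood of `1` there is an open normal subgroup. -/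

theorem exists_openNormal (hG : IsProPGroup p G) {W : Set G} (hW : IsOpen W) (h1 : (1 : G) ∈ W) :
    ∃ U : Subgroup G, U.Normal ∧ IsOpen (U : Set G) ∧ (U : Set G) ⊆ W := by
  obtain ⟨hc, ht2, htd, -⟩ := hG
  obtain ⟨V, hV, h1V, hVW⟩ := compact_exists_isClopen_in_isOpen hW h1
  obtain ⟨H, hH⟩ := IsTopologicalGroup.exist_openNormalSubgroup_sub_clopen_nhds_of_one hV h1V
  exact ⟨H.toOpenSubgroup.toSubgroup, H.isNormal', H.toOpenSubgroup.isOpen,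
    fun g hg => hVW (hH hg)⟩

/-- An element lying in all open normal subgroups is trivial. -/

theorem eq_one_of_mem_all (hG : IsProPGroup p G) {d : G}
    (hd : ∀ U : Subgroup G, U.Normal → IsOpen (U : Set G) → d ∈ U) : d = 1 := by
  by_contra hne
  haveI : T2Space G := hG.2.1
  obtain ⟨U, hUn, hUo, hUW⟩ := exists_openNormal hG (isOpen_compl_singleton (x := d))
    (by simp [Ne.symm hne])
  exact hUW (hd U hUn hUo) rfl

theorem frattiniOf_bot : frattiniOf (⊥ : Subgroup G) = ⊥ := by
  have hall : ∀ M : Subgroup ↥(⊥ : Subgroup G), M = ⊤ := by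
    intro M
    ext g
    simp only [Subgroup.mem_top, iff_true]
    have hg2 := g.2
    rw [Subgroup.mem_bot] at hg2
    have hg : g = 1 := Subtype.ext hg2
    rw [hg]; exact M.one_mem
  have hset : {M : Subgroup ↥(⊥ : Subgroup G) | IsOpen (M : Set ↥(⊥ : Subgroup G)) ∧ IsCoatom M}
      = ∅ := by
    ext M
    simp only [Set.mem_setOf_eq, Set.mem_empty_iff_false, iff_false, not_and]
    intro _ hM
    exact hM.1 (hall M)
  rw [frattiniOf, hset]
  simp only [Set.mem_empty_iff_false, not_false_eq_true, iInf_neg, iInf_top]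
  rw [← MonoidHom.range_eq_map, Subgroup.range_subtype]

theorem frattiniOf_procyclic (hG : IsProPGroup p G) (x : G) :
    frattiniOf ((Subgroup.zpowers x).topologicalClosure)
      = (Subgroup.zpowers (x ^ p)).topologicalClosure := by
  haveI hc : CompactSpace G := hG.1
  haveI ht2 : T2Space G := hG.2.1
  set X := (Subgroup.zpowers x).topologicalClosure with hXd
  set P := (Subgroup.zpowers (x ^ p)).topologicalClosure with hPd
  have hxX : x ∈ X := Subgroup.le_topologicalClosure _ (Subgroup.mem_zpowers x)
  have hxpP : x ^ p ∈ P := Subgroup.le_topologicalClosure _ (Subgroup.mem_zpowers _)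
  have hPle : P ≤ X := Subgroup.topologicalClosure_minimal _
    (by rw [Subgroup.zpowers_le]; exact X.pow_mem hxX p) (Subgroup.isClosed_topologicalClosure _)
  have hPcl : IsClosed (P : Set G) := Subgroup.isClosed_topologicalClosure _
  by_cases hx1 : x = 1
  · subst hx1
    have h2 : ((⊥ : Subgroup G)).topologicalClosure = ⊥ :=
      le_antisymm (Subgroup.topologicalClosure_minimal _ le_rfl
        (by rw [Subgroup.coe_bot]; exact isClosed_singleton)) (Subgroup.le_topologicalClosure _)
    rw [hXd, hPd, one_pow, Subgroup.zpowers_one_eq_bot, h2, frattiniOf_bot]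
  -- x ≠ 1 : key facts
  have hxP : x ∉ P := by
    intro hxP
    obtain ⟨U, hUn, hUo, hUW⟩ := exists_openNormal hG (isOpen_compl_singleton (x := x))
      (by simp [Ne.symm hx1])
    haveI := hUn
    have hxU : x ∉ U := fun h => hUW h rfl
    have hV : P ≤ Subgroup.zpowers (x ^ p) ⊔ U :=
      Subgroup.topologicalClosure_minimal _ le_sup_left
        (Subgroup.isClosed_of_isOpen _ (Subgroup.isOpen_mono le_sup_right hUo))
    have hxV : x ∈ Subgroup.zpowers (x ^ p) ⊔ U := hV hxP
    rw [← SetLike.mem_coe, Subgroup.mul_normal, Set.mem_mul] at hxV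
    obtain ⟨a, ha, b, hb, hab⟩ := hxV
    obtain ⟨j, hj⟩ := Subgroup.mem_zpowers_iff.mp ha
    set π := QuotientGroup.mk' U with hπ
    have hb' : π b = 1 := by
      rw [QuotientGroup.mk'_apply]
      exact (QuotientGroup.eq_one_iff _).mpr hb
    have hπx : π x ^ ((p : ℤ) * j) = π x := by
      have h1 : π a * π b = π x := by rw [← map_mul, hab]
      rw [hb', mul_one] at h1
      calc π x ^ ((p : ℤ) * j) = π (x ^ ((p : ℤ) * j)) := (map_zpow π x _).symm
        _ = π ((x ^ p) ^ j) := by rw [zpow_mul, zpow_natCast]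
        _ = π a := by rw [hj]
        _ = π x := h1
    obtain ⟨e, he⟩ := hG.2.2.2 U hUn hUo
    have hord : orderOf (π x) ∣ p ^ e := by
      rw [← he, Subgroup.index_eq_card]
      exact orderOf_dvd_natCard _
    have : π x = 1 := eq_one_of_ppow hord hπx
    rw [QuotientGroup.mk'_apply] at this
    exact hxU ((QuotientGroup.eq_one_iff _).mp this)
  have hcover : ∀ g ∈ X, ∃ i : ℕ, i < p ∧ ∃ w ∈ P, g = x ^ i * w := by
    have hC : IsClosed (⋃ i ∈ Finset.range p, x ^ i • (P : Set G)) :=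
      Set.Finite.isClosed_biUnion (Finset.finite_toSet _) (fun i _ => hPcl.smul _)
    have hsub : (Subgroup.zpowers x : Set G) ⊆ ⋃ i ∈ Finset.range p, x ^ i • (P : Set G) := by
      rintro g hg
      obtain ⟨j, rfl⟩ := Subgroup.mem_zpowers_iff.mp hg
      have hp0 : (0 : ℤ) < (p : ℤ) := by exact_mod_cast (Fact.out : p.Prime).pos
      have hi0 : 0 ≤ j % p := Int.emod_nonneg j (ne_of_gt hp0)
      have hip : j % p < p := Int.emod_lt_of_pos j hp0
      have hxj : x ^ j = x ^ (j % p).toNat * (x ^ p) ^ (j / p) := by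
        rw [← zpow_natCast x (j % p).toNat, Int.toNat_of_nonneg hi0, ← zpow_natCast x p,
          ← zpow_mul, ← zpow_add]
        congr 1
        rw [mul_comm ((p : ℤ)) (j / (p : ℤ))]
        exact (Int.emod_add_ediv_mul j ((p : ℤ))).symm
      have hiN : (j % p).toNat < p := by omega
      refine Set.mem_biUnion (Finset.mem_range.mpr hiN) ?_
      rw [hxj, ← smul_eq_mul]
      exact Set.smul_mem_smul_set (Subgroup.le_topologicalClosure _
        (Subgroup.zpow_mem _ (Subgroup.mem_zpowers _) _))
    intro g hg
    have hgC : g ∈ ⋃ i ∈ Finset.range p, x ^ i • (P : Set G) := by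
      have h2 : (X : Set G) ⊆ ⋃ i ∈ Finset.range p, x ^ i • (P : Set G) := by
        rw [hXd, Subgroup.topologicalClosure_coe]
        exact closure_minimal hsub hC
      exact h2 hg
    simp only [Set.mem_iUnion] at hgC
    obtain ⟨i, hi, hmem⟩ := hgC
    obtain ⟨w, hw, hwg⟩ := hmem
    have hg' : x ^ i * w = g := by simpa [smul_eq_mul] using hwg
    exact ⟨i, Finset.mem_range.mp hi, w, hw, hg'.symm⟩
  have hgcd : ∀ i : ℕ, 0 < i → i < p → Nat.gcd i p = 1 := by
    intro i hi0 hip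
    have : ¬ p ∣ i := fun hd => absurd (Nat.le_of_dvd hi0 hd) (not_le.mpr hip)
    exact (Nat.coprime_comm.mp ((Fact.out : p.Prime).coprime_iff_not_dvd.mpr this))
  have hxiP : ∀ i : ℕ, 0 < i → i < p → x ^ i ∉ P := by
    intro i hi0 hip hmem
    exact hxP (pow_coprime_mem (hgcd i hi0 hip) hmem hxpP)
  -- the subgroup PX := P inside X
  set PX : Subgroup ↥X := P.subgroupOf X with hPXd
  have hmemPX : ∀ g : ↥X, g ∈ PX ↔ (g : G) ∈ P := fun g => Subgroup.mem_subgroupOf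
  set xt : ↥X := ⟨x, hxX⟩ with hxtd
  have hxtp : xt ^ p ∈ PX := by
    rw [hmemPX]
    have : ((xt ^ p : ↥X) : G) = x ^ p := by push_cast [hxtd]; ring_nf
    rw [this]
    exact hxpP
  have hxtPX : xt ∉ PX := fun h => hxP ((hmemPX xt).mp h)
  have hPXcarrier : (PX : Set ↥X) = Subtype.val ⁻¹' (P : Set G) := by
    ext g; exact hmemPX g
  have hPXclosed : IsClosed (PX : Set ↥X) := by
    rw [hPXcarrier]
    exact hPcl.preimage continuous_subtype_val
  have hPXopen : IsOpen (PX : Set ↥X) := by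
    rw [← isClosed_compl_iff]
    have hset : (PX : Set ↥X)ᶜ = Subtype.val ⁻¹' (⋃ i ∈ Finset.Ioo 0 p, x ^ i • (P : Set G)) := by
      ext g
      simp only [Set.mem_compl_iff, SetLike.mem_coe, hmemPX, Set.mem_preimage]
      constructor
      · intro hgP
        obtain ⟨i, hip, w, hw, hgw⟩ := hcover (g : G) g.2
        have hi0 : i ≠ 0 := by
          rintro rfl
          rw [pow_zero, one_mul] at hgw
          exact hgP (hgw ▸ hw)
        refine Set.mem_biUnion (Finset.mem_Ioo.mpr ⟨Nat.pos_of_ne_zero hi0, hip⟩) ?_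
        rw [hgw, ← smul_eq_mul]
        exact Set.smul_mem_smul_set hw
      · intro hmem hgP
        simp only [Set.mem_iUnion] at hmem
        obtain ⟨i, hi, w, hw, hwg⟩ := hmem
        have hxi : x ^ i ∈ P := by
          have h1 : x ^ i * w = (g : G) := by simpa [smul_eq_mul] using hwg
          have : x ^ i = (g : G) * w⁻¹ := by rw [← h1, mul_assoc, mul_inv_cancel, mul_one]
          rw [this]
          exact P.mul_mem hgP (P.inv_mem hw)
        exact hxiP i (Finset.mem_Ioo.mp hi).1 (Finset.mem_Ioo.mp hi).2 hxi
    rw [hset]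
    exact (Set.Finite.isClosed_biUnion (Finset.finite_toSet _)
      (fun i _ => hPcl.smul _)).preimage continuous_subtype_val
  have hcoverX : ∀ h : ↥X, ∃ i : ℕ, i < p ∧ ∃ w : ↥X, w ∈ PX ∧ h = xt ^ i * w := by
    intro h
    obtain ⟨i, hip, w, hw, hgw⟩ := hcover (h : G) h.2
    have hwX : w ∈ X := hPle hw
    refine ⟨i, hip, ⟨w, hwX⟩, (hmemPX _).mpr hw, ?_⟩
    apply Subtype.ext
    push_cast [hxtd]
    exact hgw
  have hPXcoatom : IsCoatom PX := by
    constructor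
    · intro htop
      rw [htop] at hxtPX
      exact hxtPX (Subgroup.mem_top xt)
    · intro S hS
      obtain ⟨g, hgS, hgPX⟩ := SetLike.exists_of_lt hS
      obtain ⟨i, hip, w, hwPX, hgw⟩ := hcoverX g
      have hi0 : i ≠ 0 := by
        rintro rfl
        rw [pow_zero, one_mul] at hgw
        exact hgPX (hgw ▸ hwPX)
      have hxiS : xt ^ i ∈ S := by
        have : xt ^ i = g * w⁻¹ := by rw [hgw, mul_assoc, mul_inv_cancel, mul_one]
        rw [this]
        exact S.mul_mem hgS (S.inv_mem (hS.le hwPX))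
      have hxS : xt ∈ S :=
        pow_coprime_mem (hgcd i (Nat.pos_of_ne_zero hi0) hip) hxiS (hS.le hxtp)
      rw [eq_top_iff]
      intro h _
      obtain ⟨i', _, w', hw'PX, hgw'⟩ := hcoverX h
      rw [hgw']
      exact S.mul_mem (S.pow_mem hxS i') (hS.le hw'PX)
  -- every open coatom contains PX
  have hallM : ∀ M : Subgroup ↥X, IsOpen (M : Set ↥X) → IsCoatom M → PX ≤ M := by
    intro M hMo hMco
    obtain ⟨W, hWo, hWM⟩ := isOpen_induced_iff.mp hMo
    have h1W : (1 : G) ∈ W := by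
      have h1M : (1 : ↥X) ∈ (M : Set ↥X) := M.one_mem
      rw [← hWM] at h1M
      simpa using h1M
    obtain ⟨U, hUn, hUo, hUW⟩ := exists_openNormal hG hWo h1W
    haveI := hUn
    obtain ⟨e, he⟩ := hG.2.2.2 U hUn hUo
    haveI : U.FiniteIndex := ⟨by rw [he]; exact pow_ne_zero _ (Fact.out : p.Prime).pos.ne'⟩
    have hxpe : x ^ p ^ e ∈ U := by
      have := Subgroup.pow_index_mem U x
      rwa [he] at this
    set N : Subgroup ↥X := U.subgroupOf X with hNd
    haveI : N.Normal := Subgroup.normal_subgroupOf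
    have hNM : N ≤ M := by
      intro n hn
      have h1 : (n : G) ∈ U := Subgroup.mem_subgroupOf.mp hn
      have h2 : (n : G) ∈ W := hUW h1
      have : n ∈ (M : Set ↥X) := by rw [← hWM]; exact h2
      exact this
    set φ := QuotientGroup.mk' N with hφd
    set c := φ xt with hcd
    have hsurjpow : ∀ g : ↥X, ∃ j : ℤ, φ g = c ^ j := by
      intro g
      have hgo : IsOpen ((g : G) • (U : Set G)) := hUo.smul _
      have hgm : (g : G) ∈ (g : G) • (U : Set G) :=
        ⟨1, U.one_mem, by simp⟩
      have hcl : (g : G) ∈ closure (Subgroup.zpowers x : Set G) := by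
        rw [← Subgroup.topologicalClosure_coe]
        exact g.2
      obtain ⟨h, hh1, hh2⟩ := mem_closure_iff.mp hcl _ hgo hgm
      obtain ⟨uu, huu, huh⟩ := hh1
      obtain ⟨j, hj⟩ := Subgroup.mem_zpowers_iff.mp hh2
      refine ⟨j, ?_⟩
      have hkey : g⁻¹ * xt ^ j ∈ N := by
        rw [hNd, Subgroup.mem_subgroupOf]
        have hcoe : ((g⁻¹ * xt ^ j : ↥X) : G) = (g : G)⁻¹ * x ^ j := by
          push_cast [hxtd]
          ring_nf
        rw [hcoe]
        have huu' : (g : G)⁻¹ * x ^ j = uu := by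
          have : (g : G) * uu = x ^ j := by
            rw [hj]
            simpa [smul_eq_mul] using huh
          rw [← this, ← mul_assoc, inv_mul_cancel, one_mul]
        rw [huu']
        exact huu
      have h1 : φ (g⁻¹ * xt ^ j) = 1 := by
        rw [hφd, QuotientGroup.mk'_apply]
        exact (QuotientGroup.eq_one_iff _).mpr hkey
      rw [map_mul, map_inv, map_zpow] at h1
      exact inv_mul_eq_one.mp h1
    have hce : c ^ p ^ e = 1 := by
      rw [hcd, ← map_pow, hφd, QuotientGroup.mk'_apply]
      refine (QuotientGroup.eq_one_iff _).mpr ?_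
      rw [Subgroup.mem_subgroupOf]
      have : ((xt ^ p ^ e : ↥X) : G) = x ^ p ^ e := by push_cast [hxtd]; ring_nf
      rw [this]
      exact hxpe
    have hordc : orderOf c ∣ p ^ e := orderOf_dvd_of_pow_eq_one hce
    set Mb := M.map φ with hMbd
    have hcomap : Subgroup.comap φ Mb = M := by
      rw [hMbd, Subgroup.comap_map_eq, hφd, QuotientGroup.ker_mk']
      exact sup_eq_left.mpr hNM
    have hMbne : Mb ≠ ⊤ := by
      intro h
      apply hMco.1
      rw [← hcomap, h, Subgroup.comap_top]
    have hφsurj : Function.Surjective φ := QuotientGroup.mk'_surjective N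
    have hMbco : IsCoatom Mb := by
      refine ⟨hMbne, fun S hSlt => ?_⟩
      have h1 : M < Subgroup.comap φ S := by
        refine lt_of_le_of_ne (by rw [← hcomap]; exact Subgroup.comap_mono hSlt.le) ?_
        intro heq
        apply hSlt.ne
        rw [← Subgroup.map_comap_eq_self_of_surjective hφsurj S, ← heq, hMbd]
      have h2 := hMco.2 _ h1
      rw [← Subgroup.map_comap_eq_self_of_surjective hφsurj S, h2, ← MonoidHom.range_eq_map]
      exact (MonoidHom.range_eq_top).mpr hφsurj
    obtain ⟨t, hte, hot⟩ := (Nat.dvd_prime_pow (Fact.out : p.Prime)).mp hordc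
    have ht1 : 1 ≤ t := by
      by_contra h0
      have ht0 : t = 0 := by omega
      rw [ht0, pow_zero] at hot
      have hc1 : c = 1 := orderOf_eq_one_iff.mp hot
      apply hMco.1
      rw [eq_top_iff]
      intro g _
      obtain ⟨j, hj⟩ := hsurjpow g
      have h2 : φ g = 1 := by rw [hj, hc1, one_zpow]
      rw [hφd, QuotientGroup.mk'_apply, QuotientGroup.eq_one_iff] at h2
      exact hNM h2
    have hzne : Subgroup.zpowers (c ^ p) ≠ ⊤ := by
      intro h
      have hcz : c ∈ Subgroup.zpowers (c ^ p) := h ▸ Subgroup.mem_top c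
      obtain ⟨j, hj⟩ := Subgroup.mem_zpowers_iff.mp hcz
      have hcc : c ^ ((p : ℤ) * j) = c := by
        rw [zpow_mul, zpow_natCast]
        exact hj
      have hc1 : c = 1 := eq_one_of_ppow hordc hcc
      rw [hc1, orderOf_one] at hot
      have h2p : 2 ≤ p := (Fact.out : p.Prime).two_le
      have : p ≤ p ^ t := Nat.le_self_pow (by omega) p
      omega
    have hMbz : Mb ≤ Subgroup.zpowers (c ^ p) := by
      intro s hs
      obtain ⟨g, hgM, rfl⟩ := hs
      obtain ⟨j, hj⟩ := hsurjpow g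
      by_cases hpj : (p : ℤ) ∣ j
      · obtain ⟨j', rfl⟩ := hpj
        rw [hj, zpow_mul, zpow_natCast]
        exact Subgroup.zpow_mem _ (Subgroup.mem_zpowers _) j'
      · exfalso
        apply hMbne
        have hcMb : c ∈ Mb := by
          have hs' : φ g ∈ Mb := Subgroup.mem_map_of_mem _ hgM
          have h1 : c ^ j ∈ Mb := hj ▸ hs'
          have h2 : c ^ ((p : ℤ) ^ t) ∈ Mb := by
            have hpt : c ^ ((p : ℤ) ^ t) = 1 := by
              have : ((p : ℤ) ^ t) = ((p ^ t : ℕ) : ℤ) := by push_cast; ring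
              rw [this, zpow_natCast, ← hot, pow_orderOf_eq_one]
            rw [hpt]
            exact Mb.one_mem
          refine zpow_coprime_mem ?_ h1 h2
          have hpp : Prime (p : ℤ) := Nat.prime_iff_prime_int.mp (Fact.out : p.Prime)
          exact ((hpp.coprime_iff_not_dvd.mpr hpj).symm).pow_right
        rw [eq_top_iff]
        intro q _
        obtain ⟨gq, rfl⟩ := hφsurj q
        obtain ⟨j', hj'⟩ := hsurjpow gq
        rw [hj']
        exact Subgroup.zpow_mem _ hcMb j'
    have hcp : c ^ p ∈ Mb := by
      rcases lt_or_eq_of_le hMbz with hlt | heq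
      · exact absurd (hMbco.2 _ hlt) hzne
      · rw [heq]
        exact Subgroup.mem_zpowers _
    have hxpM : xt ^ p ∈ M := by
      rw [← hcomap]
      have : φ (xt ^ p) ∈ Mb := by
        rw [map_pow]
        exact hcp
      exact this
    -- PX ≤ M
    haveI hXcs : CompactSpace ↥X :=
      isCompact_iff_compactSpace.mp ((Subgroup.isClosed_topologicalClosure _).isCompact)
    have hMcl : IsClosed (M : Set ↥X) := Subgroup.isClosed_of_isOpen M hMo
    have hMimg : IsClosed (Subtype.val '' (M : Set ↥X)) :=
      (hMcl.isCompact.image continuous_subtype_val).isClosed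
    have hzpsub : (Subgroup.zpowers (x ^ p) : Set G) ⊆ Subtype.val '' (M : Set ↥X) := by
      rintro g hg
      obtain ⟨j, rfl⟩ := Subgroup.mem_zpowers_iff.mp hg
      refine ⟨(xt ^ p) ^ j, Subgroup.zpow_mem M hxpM j, ?_⟩
      push_cast [hxtd]
      ring_nf
    have hPsub : (P : Set G) ⊆ Subtype.val '' (M : Set ↥X) := by
      rw [hPd, Subgroup.topologicalClosure_coe]
      exact closure_minimal hzpsub hMimg
    intro g hg
    have hgP : (g : G) ∈ (P : Set G) := (hmemPX g).mp hg
    obtain ⟨g', hg', hgg⟩ := hPsub hgP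
    have : g' = g := Subtype.ext hgg
    rw [← this]
    exact hg'
  -- conclude
  have hPXin : PX ∈ {M : Subgroup ↥X | IsOpen (M : Set ↥X) ∧ IsCoatom M} := ⟨hPXopen, hPXcoatom⟩
  have hinf : (⨅ M ∈ {M : Subgroup ↥X | IsOpen (M : Set ↥X) ∧ IsCoatom M}, M) = PX :=
    le_antisymm (iInf₂_le PX hPXin) (le_iInf₂ (fun M hM => hallM M hM.1 hM.2))
  rw [frattiniOf, hinf, hPXd, Subgroup.subgroupOf_map_subtype, inf_eq_left.mpr hPle]

theorem pow_valuation_eq (hG : IsProPGroup p G) {x y z : G} {α : ℤ_[p]} (hα : α ≠ 0)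
    (hx : IsPadicPow p x α z) (hy : IsPadicPow p y α z) :
    x ^ p ^ α.valuation = y ^ p ^ α.valuation := by
  haveI ht2 : T2Space G := hG.2.1
  set k := α.valuation with hk
  set u : ℤ_[p]ˣ := PadicInt.unitCoeff hα with hu
  have hspec : α = (u : ℤ_[p]) * (p : ℤ_[p]) ^ k := PadicInt.unitCoeff_spec hα
  set β : ℤ_[p] := ((u⁻¹ : ℤ_[p]ˣ) : ℤ_[p]) with hβ
  have huβ : α * β = (p : ℤ_[p]) ^ k := by
    rw [hspec, mul_comm ((u : ℤ_[p])), mul_assoc]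
    have : (u : ℤ_[p]) * β = 1 := u.mul_inv
    rw [this, mul_one]
  set F : Filter ℕ := Filter.comap (fun n : ℕ => (n : ℤ_[p])) (nhds α) with hF
  haveI hFne : F.NeBot := Filter.comap_neBot (fun t ht => by
    obtain ⟨w, hwt, hwr⟩ := mem_closure_iff_nhds.mp (PadicInt.denseRange_natCast α) t ht
    obtain ⟨n, rfl⟩ := hwr
    exact ⟨n, hwt⟩)
  have main : ∀ U : Subgroup G, U.Normal → IsOpen (U : Set G) →
      x ^ p ^ k * (y ^ p ^ k)⁻¹ ∈ U := by
    intro U hUn hUo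
    haveI := hUn
    obtain ⟨e, he⟩ := hG.2.2.2 U hUn hUo
    have hppos : (0 : ℝ) < (p : ℝ) := by exact_mod_cast (Fact.out : p.Prime).pos
    have hpe : (0 : ℝ) < (p : ℝ) ^ (-(e : ℤ)) := zpow_pos hppos _
    obtain ⟨m, hm⟩ := PadicInt.denseRange_natCast.exists_dist_lt β hpe
    have hmβ : ‖(m : ℤ_[p]) - β‖ ≤ (p : ℝ) ^ (-(e : ℤ)) := by
      rw [dist_eq_norm, norm_sub_rev] at hm
      exact hm.le
    -- choose approximating exponents
    have choose_n : ∀ g : G, IsPadicPow p g α z → ∃ n : ℕ,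
        z⁻¹ * g ^ n ∈ U ∧ ((p : ℤ) ^ e ∣ ((n * m : ℕ) : ℤ) - (p : ℤ) ^ k) := by
      intro g hg
      have hO : IsOpen {w : G | z⁻¹ * w ∈ U} := hUo.preimage (continuous_const.mul continuous_id)
      have hzO : z ∈ {w : G | z⁻¹ * w ∈ U} := by
        simp only [Set.mem_setOf_eq, inv_mul_cancel]
        exact U.one_mem
      have hS1 : {n : ℕ | z⁻¹ * g ^ n ∈ U} ∈ F := hg (hO.mem_nhds hzO)
      have hS2 : {n : ℕ | ‖(n : ℤ_[p]) - α‖ ≤ (p : ℝ) ^ (-(e : ℤ))} ∈ F := by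
        have hball : Metric.closedBall α ((p : ℝ) ^ (-(e : ℤ))) ∈ nhds α :=
          Metric.closedBall_mem_nhds α hpe
        rw [hF]
        refine Filter.mem_of_superset (Filter.preimage_mem_comap hball) ?_
        intro n hn
        simpa [Metric.mem_closedBall, dist_eq_norm] using hn
      obtain ⟨n, hn1, hn2⟩ := Filter.nonempty_of_mem (Filter.inter_mem hS1 hS2)
      refine ⟨n, hn1, ?_⟩
      have hcast : ((((n * m : ℕ) : ℤ) - (p : ℤ) ^ k : ℤ) : ℤ_[p])
          = (m : ℤ_[p]) * ((n : ℤ_[p]) - α) + α * ((m : ℤ_[p]) - β) := by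
        push_cast
        linear_combination huβ
      rw [← PadicInt.norm_int_le_pow_iff_dvd]
      rw [hcast]
      refine le_trans (PadicInt.nonarchimedean _ _) (max_le ?_ ?_)
      · rw [norm_mul]
        exact le_trans (mul_le_of_le_one_left (norm_nonneg _) (PadicInt.norm_le_one _)) hn2
      · rw [norm_mul]
        exact le_trans (mul_le_of_le_one_left (norm_nonneg _) (PadicInt.norm_le_one _)) hmβ
    obtain ⟨n, hn1, hnd⟩ := choose_n x hx
    obtain ⟨n', hn'1, hn'd⟩ := choose_n y hy
    haveI : U.FiniteIndex := ⟨by rw [he]; exact pow_ne_zero _ (Fact.out : p.Prime).pos.ne'⟩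
    set π := QuotientGroup.mk' U with hπ
    have hord : ∀ g : G, orderOf (π g) ∣ p ^ e := by
      intro g
      rw [← he, Subgroup.index_eq_card]
      exact orderOf_dvd_natCard _
    have hcong : ∀ (g : G) (a b : ℕ), ((p : ℤ) ^ e ∣ (a : ℤ) - (b : ℤ)) → π g ^ a = π g ^ b := by
      intro g a b hab
      have h1 : a ≡ b [MOD p ^ e] := by
        rw [Nat.modEq_iff_dvd]
        push_cast
        exact dvd_sub_comm.mp hab
      have h2 : a ≡ b [MOD orderOf (π g)] := h1.of_dvd (hord g)
      exact pow_eq_pow_iff_modEq.mpr h2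
    have hzg : ∀ g : G, ∀ n : ℕ, z⁻¹ * g ^ n ∈ U → π g ^ n = π z := by
      intro g n hn
      have h1 : ((z⁻¹ * g ^ n : G) : G ⧸ U) = 1 := (QuotientGroup.eq_one_iff _).mpr hn
      have h2 : π (z⁻¹ * g ^ n) = 1 := by rw [QuotientGroup.mk'_apply]; exact h1
      rw [map_mul, map_inv, map_pow] at h2
      exact (inv_mul_eq_one.mp h2).symm
    have hchain : π (x ^ p ^ k) = π (y ^ p ^ k) := by
      rw [map_pow, map_pow]
      calc π x ^ p ^ k = π x ^ (n * m) := (hcong x _ _ (by push_cast at hnd ⊢; exact hnd)).symm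
        _ = (π x ^ n) ^ m := by rw [pow_mul]
        _ = π z ^ m := by rw [hzg x n hn1]
        _ = (π y ^ n') ^ m := by rw [hzg y n' hn'1]
        _ = π y ^ (n' * m) := by rw [pow_mul]
        _ = π y ^ p ^ k := hcong y _ _ (by push_cast at hn'd ⊢; exact hn'd)
    have : π (x ^ p ^ k * (y ^ p ^ k)⁻¹) = 1 := by
      rw [map_mul, map_inv, hchain, mul_inv_cancel]
    have h2 : ((x ^ p ^ k * (y ^ p ^ k)⁻¹ : G) : G ⧸ U) = 1 := by
      rw [← QuotientGroup.mk'_apply]; exact this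
    exact (QuotientGroup.eq_one_iff _).mp h2
  have := eq_one_of_mem_all hG main
  exact mul_inv_eq_one.mp this

theorem eq_of_pow_p_eq (hG : IsProPGroup p G) (hFI : FrattiniInjective G) {x y : G}
    (h : x ^ p = y ^ p) : x = y := by
  haveI ht2 : T2Space G := hG.2.1
  have hTopFG : ∀ g : G, TopFG ((Subgroup.zpowers g).topologicalClosure) := fun g =>
    ⟨{g}, by rw [Finset.coe_singleton, ← Subgroup.zpowers_eq_closure]⟩
  have key : ∀ a b : G, a ^ p = b ^ p →
      (Subgroup.zpowers a).topologicalClosure = (Subgroup.zpowers b).topologicalClosure := by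
    intro a b hab
    refine hFI _ _ (Subgroup.isClosed_topologicalClosure _)
      (Subgroup.isClosed_topologicalClosure _) (hTopFG a) (hTopFG b) ?_
    rw [frattiniOf_procyclic hG a, frattiniOf_procyclic hG b, hab]
  have hXY := key x y h
  have hxX : x ∈ (Subgroup.zpowers x).topologicalClosure :=
    Subgroup.le_topologicalClosure _ (Subgroup.mem_zpowers x)
  have hyX : y ∈ (Subgroup.zpowers x).topologicalClosure := by
    rw [hXY]
    exact Subgroup.le_topologicalClosure _ (Subgroup.mem_zpowers y)
  have hcomm : Commute x y := by
    have hcg : ∀ a b : ↥(Subgroup.zpowers x), a * b = b * a := by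
      rintro ⟨a, ha⟩ ⟨b, hb⟩
      obtain ⟨j, rfl⟩ := Subgroup.mem_zpowers_iff.mp ha
      obtain ⟨k, rfl⟩ := Subgroup.mem_zpowers_iff.mp hb
      apply Subtype.ext
      show x ^ j * x ^ k = x ^ k * x ^ j
      rw [← zpow_add, ← zpow_add, add_comm]
    letI : CommGroup ↥((Subgroup.zpowers x).topologicalClosure) :=
      Subgroup.commGroupTopologicalClosure _ hcg
    have hmc := mul_comm (⟨x, hxX⟩ : ↥((Subgroup.zpowers x).topologicalClosure)) ⟨y, hyX⟩
    have := Subtype.ext_iff.mp hmc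
    push_cast at this
    exact this
  have hw : (x * y⁻¹) ^ p = 1 := by
    rw [(hcomm.inv_right).mul_pow, h, inv_pow, mul_inv_cancel]
  have hbot : (Subgroup.zpowers (1 : G)).topologicalClosure = ⊥ := by
    rw [Subgroup.zpowers_one_eq_bot]
    exact le_antisymm (Subgroup.topologicalClosure_minimal _ le_rfl
      (by rw [Subgroup.coe_bot]; exact isClosed_singleton)) (Subgroup.le_topologicalClosure _)
  have h2 := key (x * y⁻¹) 1 (by rw [hw, one_pow])
  have hmem : x * y⁻¹ ∈ (⊥ : Subgroup G) := by
    rw [← hbot, ← h2]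
    exact Subgroup.le_topologicalClosure _ (Subgroup.mem_zpowers _)
  rw [Subgroup.mem_bot] at hmem
  exact mul_inv_eq_one.mp hmem

/-- Main induction: equality of `p^k`-th powers implies equality. -/
theorem eq_of_pow_ppow_eq (hG : IsProPGroup p G) (hFI : FrattiniInjective G) :
    ∀ (k : ℕ) (a b : G), a ^ p ^ k = b ^ p ^ k → a = b := by
  intro k
  induction k with
  | zero => intro a b h; simpa using h
  | succ k ih =>
    intro a b h
    refine eq_of_pow_p_eq hG hFI (ih (a ^ p) (b ^ p) ?_)
    rw [← pow_mul, ← pow_mul, ← pow_succ']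
    exact h

end AuxProofs

/-- A Frattini-injective pro-`p` group has unique extraction of roots:
`x ^ α = y ^ α` for a nonzero `p`-adic integer `α` implies `x = y`. -/
theorem stmt_5 {p : ℕ} [Fact p.Prime] (G : Type*) [Group G] [TopologicalSpace G]
    [IsTopologicalGroup G] (hG : IsProPGroup p G) (hFI : FrattiniInjective G)
    (x y z : G) (α : ℤ_[p]) (hα : α ≠ 0)
    (hx : IsPadicPow p x α z) (hy : IsPadicPow p y α z) : x = y :=
  eq_of_pow_ppow_eq hG hFI _ x y (pow_valuation_eq hG hα hx hy)
end

section
/- A pro-p group G is Frattini-resistant if and only if for all finitely generated closed subgroups H and K of G, Φ(H) ≤ Φ(K) implies H ≤ K. -/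
theorem my_exists_openNormal {K : Type*} [Group K] [TopologicalSpace K] [IsTopologicalGroup K]
    [CompactSpace K] [T2Space K] [TotallyDisconnectedSpace K] {U : Set K} (hU : IsOpen U)
    (h1 : (1 : K) ∈ U) : ∃ N : OpenNormalSubgroup K, (N : Set K) ⊆ U := by
  obtain ⟨V, hV, h1V, hVU⟩ := compact_exists_isClopen_in_isOpen hU h1
  obtain ⟨N, hN⟩ := IsTopologicalGroup.exist_openNormalSubgroup_sub_clopen_nhds_of_one hV h1V
  exact ⟨N, hN.trans hVU⟩

/-- every open subgroup of a closed subgroup of a pro-p group has p-power index -/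

theorem my_index_pPow {p : ℕ} {G : Type*} [Group G] [TopologicalSpace G] [IsTopologicalGroup G]
    (hp : p.Prime) (hG : IsProPGroup p G) (H : Subgroup G)
    (U : Subgroup ↥H) (hU : IsOpen (U : Set ↥H)) : ∃ n, U.index = p ^ n := by
  obtain ⟨hc, ht2, htd, hidx⟩ := hG
  obtain ⟨W, hWopen, hWU⟩ := isOpen_induced_iff.mp hU
  have h1W : (1 : G) ∈ W := by
    have : (1 : ↥H) ∈ U := U.one_mem
    have h2 : (1 : ↥H) ∈ Subtype.val ⁻¹' W := hWU ▸ this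
    exact h2
  obtain ⟨N, hN⟩ := my_exists_openNormal hWopen h1W
  obtain ⟨n, hn⟩ := hidx N N.isNormal' N.toOpenSubgroup.isOpen
  let f : ↥H →* G ⧸ (N : Subgroup G) := (QuotientGroup.mk' _).comp H.subtype
  have hker : f.ker ≤ U := by
    intro y hy
    have : (y : G) ∈ (N : Subgroup G) := by
      have := (QuotientGroup.eq_one_iff (y : G)).mp hy
      exact this
    have h2 : y ∈ Subtype.val ⁻¹' W := hN this
    rw [hWU] at h2
    exact h2
  have hdvd : U.index ∣ p ^ n := by
    calc U.index ∣ f.ker.index := Subgroup.index_dvd_of_le hker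
      _ = Nat.card f.range := Subgroup.index_ker f
      _ ∣ Nat.card (G ⧸ (N : Subgroup G)) := Subgroup.card_subgroup_dvd_card _
      _ = p ^ n := by rw [← Subgroup.index_eq_card]; exact hn
  obtain ⟨m, _, hm⟩ := (Nat.dvd_prime_pow hp).mp hdvd
  exact ⟨m, hm⟩

theorem my_pow_p_one {p : ℕ} (hp : p.Prime) {Q : Type*} [Group Q]
    (hQ : IsPGroup p Q) (hsub : ∀ L : Subgroup Q, L = ⊥ ∨ L = ⊤) (q : Q) : q ^ p = 1 := by
  rcases hsub (Subgroup.zpowers (q ^ p)) with h | h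
  · exact Subgroup.zpowers_eq_bot.mp h
  · have hq : q ∈ Subgroup.zpowers (q ^ p) := h ▸ Subgroup.mem_top q
    obtain ⟨m, hm⟩ := Subgroup.mem_zpowers_iff.mp hq
    have h1 : q ^ ((p : ℤ) * m - 1) = 1 := by
      rw [zpow_sub, zpow_one, zpow_mul, zpow_natCast, hm, mul_inv_cancel]
    haveI : Fact p.Prime := ⟨hp⟩
    obtain ⟨k, hk⟩ := (IsPGroup.iff_orderOf.mp hQ) q
    rcases Nat.eq_zero_or_pos k with rfl | hkpos
    · have h2 : orderOf q = 1 := by simpa using hk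
      rw [orderOf_eq_one_iff.mp h2, one_pow]
    · exfalso
      have hdvd : (orderOf q : ℤ) ∣ (p : ℤ) * m - 1 := orderOf_dvd_iff_zpow_eq_one.mpr h1
      have hpd : (p : ℤ) ∣ (orderOf q : ℤ) := by
        rw [hk]
        exact_mod_cast dvd_pow_self p hkpos.ne'
      have h3 : (p : ℤ) ∣ 1 := by
        have := dvd_sub (dvd_mul_right (p : ℤ) m) (hpd.trans hdvd)
        simpa using this
      have h4 := Int.le_of_dvd one_pos h3
      have h5 := hp.two_le
      omega

theorem my_coatom_map {P Q : Type*} [Group P] [Group Q] (f : P →* Q)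
    (hf : Function.Surjective f) {M : Subgroup P} (hker : f.ker ≤ M) (hM : IsCoatom M) :
    IsCoatom (M.map f) := by
  have hcm : Subgroup.comap f (Subgroup.map f M) = M := by
    rw [Subgroup.comap_map_eq, sup_of_le_left hker]
  constructor
  · intro h
    apply hM.1
    rw [← hcm, h, Subgroup.comap_top]
  · intro L hL
    have hle : M ≤ Subgroup.comap f L := by
      rw [← hcm]
      exact Subgroup.comap_mono hL.le
    have hne : M ≠ Subgroup.comap f L := by
      intro h
      apply hL.ne
      rw [h, Subgroup.map_comap_eq_self_of_surjective hf]
    have := hM.2 _ (lt_of_le_of_ne hle hne)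
    rw [← Subgroup.map_comap_eq_self_of_surjective hf L, this,
      Subgroup.map_top_of_surjective f hf]

theorem my_quot_subgroups {P : Type*} [Group P] {M : Subgroup P} [M.Normal] (hM : IsCoatom M)
    (L : Subgroup (P ⧸ M)) : L = ⊥ ∨ L = ⊤ := by
  have hker : (QuotientGroup.mk' M).ker = M := QuotientGroup.ker_mk' M
  have hsur : Function.Surjective (QuotientGroup.mk' M) := QuotientGroup.mk'_surjective M
  have hle : M ≤ Subgroup.comap (QuotientGroup.mk' M) L := by
    intro y hy
    have : QuotientGroup.mk' M y = 1 := by rwa [← MonoidHom.mem_ker, hker]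
    simp only [Subgroup.mem_comap, this]
    exact L.one_mem
  have hL : L = Subgroup.map (QuotientGroup.mk' M) (Subgroup.comap (QuotientGroup.mk' M) L) :=
    (Subgroup.map_comap_eq_self_of_surjective hsur L).symm
  rcases eq_or_lt_of_le hle with h | h
  · left
    rw [hL, ← h]
    rw [eq_bot_iff]
    rintro y ⟨z, hz, rfl⟩
    have : z ∈ (QuotientGroup.mk' M).ker := by rwa [hker]
    simpa using this
  · right
    rw [hL, hM.2 _ h, Subgroup.map_top_of_surjective _ hsur]

theorem my_pow_mem_open_coatom {p : ℕ} {G : Type*} [Group G] [TopologicalSpace G]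
    [IsTopologicalGroup G] (hp : p.Prime) (hG : IsProPGroup p G) {H : Subgroup G}
    (hH : IsClosed (H : Set G)) {M : Subgroup ↥H} (hMo : IsOpen (M : Set ↥H))
    (hMc : IsCoatom M) (h : ↥H) : h ^ p ∈ M := by
  haveI := hG.1
  haveI := hG.2.1
  haveI := hG.2.2.1
  haveI : CompactSpace ↥H := isCompact_iff_compactSpace.mp hH.isCompact
  obtain ⟨S, hS⟩ := my_exists_openNormal hMo M.one_mem
  obtain ⟨n, hn⟩ := my_index_pPow hp hG H (S : Subgroup ↥H) S.toOpenSubgroup.isOpen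
  haveI : (S : Subgroup ↥H).Normal := S.isNormal'
  have hcardP : Nat.card (↥H ⧸ (S : Subgroup ↥H)) = p ^ n := by
    rw [← Subgroup.index_eq_card]; exact hn
  haveI : Finite (↥H ⧸ (S : Subgroup ↥H)) := Nat.finite_of_card_ne_zero
    (by rw [hcardP]; exact pow_ne_zero n hp.ne_zero)
  have hPG : IsPGroup p (↥H ⧸ (S : Subgroup ↥H)) := IsPGroup.of_card hcardP
  haveI : Fact p.Prime := ⟨hp⟩
  haveI : Group.IsNilpotent (↥H ⧸ (S : Subgroup ↥H)) := hPG.isNilpotent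
  set f := QuotientGroup.mk' (S : Subgroup ↥H) with hf
  have hker : f.ker ≤ M := by
    rw [hf, QuotientGroup.ker_mk']
    exact fun s hs => hS hs
  have hcoatom : IsCoatom (M.map f) := my_coatom_map f (QuotientGroup.mk'_surjective _) hker hMc
  haveI : (M.map f).Normal :=
    Subgroup.NormalizerCondition.normal_of_coatom (M.map f) normalizerCondition_of_isNilpotent hcoatom
  have hQp : IsPGroup p ((↥H ⧸ (S : Subgroup ↥H)) ⧸ M.map f) := hPG.to_quotient _
  have hone := my_pow_p_one hp hQp (my_quot_subgroups hcoatom) (QuotientGroup.mk' (M.map f) (f h))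
  rw [← map_pow, ← MonoidHom.mem_ker, QuotientGroup.ker_mk'] at hone
  have h2 : h ^ p ∈ Subgroup.comap f (M.map f) := by
    rw [Subgroup.mem_comap, map_pow]
    exact hone
  rwa [Subgroup.comap_map_eq, sup_of_le_left hker] at h2

theorem my_pow_mem_frattiniOf {p : ℕ} {G : Type*} [Group G] [TopologicalSpace G]
    [IsTopologicalGroup G] (hp : p.Prime) (hG : IsProPGroup p G) {H : Subgroup G}
    (hH : IsClosed (H : Set G)) {x : G} (hx : x ∈ H) : x ^ p ∈ frattiniOf H := by
  refine Subgroup.mem_map.mpr ⟨(⟨x, hx⟩ : ↥H) ^ p, ?_, by simp⟩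
  rw [Subgroup.mem_iInf]
  intro M
  rw [Subgroup.mem_iInf]
  intro hM
  exact my_pow_mem_open_coatom hp hG hH hM.1 hM.2 _

theorem my_frattiniOf_le {G : Type*} [Group G] [TopologicalSpace G] (H : Subgroup G) :
    frattiniOf H ≤ H := Subgroup.map_subtype_le _

theorem my_frattiniOf_isClosed {G : Type*} [Group G] [TopologicalSpace G] [IsTopologicalGroup G]
    [CompactSpace G] [T2Space G] {H : Subgroup G} (hH : IsClosed (H : Set G)) :
    IsClosed (frattiniOf H : Set G) := by
  haveI : CompactSpace ↥H := isCompact_iff_compactSpace.mp hH.isCompact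
  have h1 : IsClosed ((⨅ M ∈ {M : Subgroup ↥H | IsOpen (M : Set ↥H) ∧ IsCoatom M}, M :
      Subgroup ↥H) : Set ↥H) := by
    rw [Subgroup.coe_iInf]
    refine isClosed_iInter fun M => ?_
    rw [Subgroup.coe_iInf]
    exact isClosed_iInter fun hM => Subgroup.isClosed_of_isOpen _ hM.1
  rw [frattiniOf, Subgroup.coe_map]
  exact (h1.isCompact.image continuous_subtype_val).isClosed

/-- A pro-`p` group is Frattini-resistant iff `Φ(H) ≤ Φ(K)` implies `H ≤ K`
for all finitely generated closed subgroups `H, K`. -/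
theorem stmt_8 {p : ℕ} (hp : p.Prime) (G : Type*) [Group G] [TopologicalSpace G]
    [IsTopologicalGroup G] (hG : IsProPGroup p G) :
    FrattiniResistant p G ↔
      ∀ H K : Subgroup G, IsClosed (H : Set G) → IsClosed (K : Set G) → TopFG H → TopFG K →
        frattiniOf H ≤ frattiniOf K → H ≤ K := by
  haveI := hG.1
  haveI := hG.2.1
  haveI := hG.2.2.1
  constructor
  · intro hFR H K hHc hKc hHfg hKfg hle h hmem
    exact hFR K hKc hKfg h (hle (my_pow_mem_frattiniOf hp hG hHc hmem))
  · intro hOR H hHc hHfg x hx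
    set N : Subgroup G := (Subgroup.closure {x ^ p}).topologicalClosure with hN
    have hNle : N ≤ frattiniOf H :=
      Subgroup.topologicalClosure_minimal _
        ((Subgroup.closure_le _).mpr (Set.singleton_subset_iff.mpr hx))
        (my_frattiniOf_isClosed hHc)
    set C : Subgroup G := (Subgroup.closure {x}).topologicalClosure with hC
    have hCclosed : IsClosed (C : Set G) := Subgroup.isClosed_topologicalClosure _
    have hxC : x ∈ C :=
      Subgroup.le_topologicalClosure _ (Subgroup.subset_closure (Set.mem_singleton x))
    have hNC : N ≤ C :=
      Subgroup.topologicalClosure_minimal _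
        ((Subgroup.closure_le _).mpr (Set.singleton_subset_iff.mpr (pow_mem hxC p))) hCclosed
    by_cases hxN : x ∈ N
    · exact my_frattiniOf_le H (hNle hxN)
    have hgen : ∀ a b : (Subgroup.closure {x} : Subgroup G), a * b = b * a := by
      rintro ⟨a, ha⟩ ⟨b, hb⟩
      refine Subtype.ext ?_
      show a * b = b * a
      obtain ⟨m, rfl⟩ := Subgroup.mem_closure_singleton.mp ha
      obtain ⟨n, rfl⟩ := Subgroup.mem_closure_singleton.mp hb
      rw [← zpow_add, ← zpow_add, add_comm]
    have hcomm : ∀ a b : ↥C, a * b = b * a := by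
      letI : CommGroup ↥C := Subgroup.commGroupTopologicalClosure _ hgen
      exact fun a b => mul_comm a b
    set M : Subgroup ↥C := N.subgroupOf C with hM
    haveI hMn : M.Normal := ⟨fun n hn g => by rw [hcomm g n, mul_inv_cancel_right]; exact hn⟩
    have hMclosed : IsClosed (M : Set ↥C) := by
      have h1 : (M : Set ↥C) = Subtype.val ⁻¹' (N : Set G) := rfl
      rw [h1]
      exact (Subgroup.isClosed_topologicalClosure _).preimage continuous_subtype_val
    haveI : CompactSpace ↥C := isCompact_iff_compactSpace.mp hCclosed.isCompact
    haveI : IsClosed (M : Set ↥C) := hMclosed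
    set x' : ↥C := (⟨x, hxC⟩ : ↥C) with hx'
    have hxM : x' ∉ M := fun h => hxN (Subgroup.mem_subgroupOf.mp h)
    have hq1 : QuotientGroup.mk' M x' ≠ 1 := by
      rw [Ne, ← MonoidHom.mem_ker, QuotientGroup.ker_mk']
      exact hxM
    have hxpN : x ^ p ∈ N :=
      Subgroup.le_topologicalClosure _ (Subgroup.subset_closure (Set.mem_singleton _))
    have hqp : QuotientGroup.mk' M x' ^ p = 1 := by
      rw [← map_pow, ← MonoidHom.mem_ker, QuotientGroup.ker_mk']
      have : ((x' ^ p : ↥C) : G) ∈ N := by simpa using hxpN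
      exact Subgroup.mem_subgroupOf.mpr this
    -- density
    have himg : (Subtype.val '' ((Subgroup.closure {x'} : Subgroup ↥C) : Set ↥C)) =
        ((Subgroup.closure {x} : Subgroup G) : Set G) := by
      ext g
      constructor
      · rintro ⟨c, hc, rfl⟩
        obtain ⟨n, rfl⟩ := Subgroup.mem_closure_singleton.mp hc
        have : ((x' ^ n : ↥C) : G) = x ^ n := by simp [hx']
        rw [this]
        exact Subgroup.zpow_mem _ (Subgroup.subset_closure (Set.mem_singleton x)) n
      · intro hg
        obtain ⟨n, rfl⟩ := Subgroup.mem_closure_singleton.mp hg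
        refine ⟨x' ^ n, ?_, by simp [hx']⟩
        exact Subgroup.zpow_mem _ (Subgroup.subset_closure (Set.mem_singleton x')) n
    have hdense : Dense ((Subgroup.zpowers (QuotientGroup.mk' M x') : Subgroup (↥C ⧸ M)) :
        Set (↥C ⧸ M)) := by
      intro q
      obtain ⟨c, rfl⟩ := QuotientGroup.mk'_surjective M q
      have hc : c ∈ _root_.closure (((Subgroup.closure {x'} : Subgroup ↥C)) : Set ↥C) := by
        rw [closure_subtype, himg]
        have : (c : G) ∈ (C : Set G) := c.2
        rwa [Subgroup.topologicalClosure_coe] at this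
      have h2 : QuotientGroup.mk' M c ∈
          _root_.closure ((QuotientGroup.mk' M) '' ((Subgroup.closure {x'} : Subgroup ↥C) : Set ↥C)) :=
        image_closure_subset_closure_image QuotientGroup.continuous_mk (Set.mem_image_of_mem _ hc)
      refine closure_mono ?_ h2
      rintro y ⟨d, hd, rfl⟩
      obtain ⟨n, rfl⟩ := Subgroup.mem_closure_singleton.mp hd
      rw [map_zpow]
      exact Subgroup.zpow_mem _ (Subgroup.mem_zpowers _) n
    have hfin : ((Subgroup.zpowers (QuotientGroup.mk' M x') : Subgroup (↥C ⧸ M)) :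
        Set (↥C ⧸ M)).Finite := by
      rw [finite_zpowers]
      exact isOfFinOrder_iff_pow_eq_one.mpr ⟨p, hp.pos, hqp⟩
    have htop : (Subgroup.zpowers (QuotientGroup.mk' M x') : Subgroup (↥C ⧸ M)) = ⊤ := by
      rw [← Subgroup.coe_eq_univ, ← hfin.isClosed.closure_eq, hdense.closure_eq]
    haveI : Finite (↥C ⧸ M) := by
      rw [← Set.finite_univ_iff]
      rw [← Subgroup.coe_eq_univ] at *
      exact htop ▸ hfin
    have hord : orderOf (QuotientGroup.mk' M x') = p := by
      have hdvd : orderOf (QuotientGroup.mk' M x') ∣ p := orderOf_dvd_of_pow_eq_one hqp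
      rcases (Nat.Prime.eq_one_or_self_of_dvd hp _ hdvd) with h | h
      · exact absurd (orderOf_eq_one_iff.mp h) hq1
      · exact h
    have hcard : Nat.card (↥C ⧸ M) = p := by
      rw [← Subgroup.card_top, ← htop, Nat.card_zpowers, hord]
    have hidx : M.index = p := by rw [Subgroup.index_eq_card, hcard]
    haveI : M.FiniteIndex := ⟨by rw [hidx]; exact hp.ne_zero⟩
    have hMopen : IsOpen (M : Set ↥C) := Subgroup.isOpen_of_isClosed_of_finiteIndex M hMclosed
    have hMcoatom : IsCoatom M := by
      constructor
      · intro h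
        exact hxM (h ▸ Subgroup.mem_top x')
      · intro L hL
        have hLker : (QuotientGroup.mk' M).ker ≤ L := by
          rw [QuotientGroup.ker_mk']
          exact hL.le
        have hLL : Subgroup.map (QuotientGroup.mk' M) L ≠ ⊥ := by
          obtain ⟨l, hlL, hlM⟩ := SetLike.exists_of_lt hL
          intro hbot
          have h2 : QuotientGroup.mk' M l ∈ Subgroup.map (QuotientGroup.mk' M) L :=
            Subgroup.mem_map_of_mem _ hlL
          rw [hbot, Subgroup.mem_bot, ← MonoidHom.mem_ker, QuotientGroup.ker_mk'] at h2
          exact hlM h2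
        have hcardL : Nat.card (Subgroup.map (QuotientGroup.mk' M) L) = p := by
          have hdvd := Subgroup.card_subgroup_dvd_card (Subgroup.map (QuotientGroup.mk' M) L)
          rw [hcard] at hdvd
          rcases (Nat.Prime.eq_one_or_self_of_dvd hp _ hdvd) with h | h
          · exact absurd (Subgroup.card_eq_one.mp h) hLL
          · exact h
        have htopL : Subgroup.map (QuotientGroup.mk' M) L = ⊤ :=
          Subgroup.eq_top_of_card_eq _ (by rw [hcardL, hcard])
        calc L = Subgroup.comap (QuotientGroup.mk' M) (Subgroup.map (QuotientGroup.mk' M) L) := by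
                rw [Subgroup.comap_map_eq, sup_of_le_left hLker]
          _ = ⊤ := by rw [htopL, Subgroup.comap_top]
    have hCle : frattiniOf C ≤ frattiniOf H := by
      have h1 : (⨅ M' ∈ {M' : Subgroup ↥C | IsOpen ((M' : Subgroup ↥C) : Set ↥C) ∧ IsCoatom M'},
          M') ≤ M := biInf_le _ ⟨hMopen, hMcoatom⟩
      calc frattiniOf C ≤ M.map C.subtype := Subgroup.map_mono h1
        _ = N ⊓ C := Subgroup.subgroupOf_map_subtype N C
        _ ≤ N := inf_le_left
        _ ≤ frattiniOf H := hNle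
    exact hOR C H hCclosed hHc ⟨{x}, by rw [Finset.coe_singleton]⟩ hHfg hCle hxC
end

section
/- Let G be a pro-p group such that (G, U, Φ(U)) is a hierarchical triple for every open subgroup U of G. Then G is strongly Frattini-resistant: (G, H, Φ(H)) is hierarchical for every closed subgroup H of G. -/
section Aux

open Subgroup Pointwise

variable {p : ℕ} {G : Type*} [Group G] [TopologicalSpace G] [IsTopologicalGroup G]

lemma memMapSubtype {U : Subgroup G} (M : Subgroup ↥U) (z : ↥U) :
    (z : G) ∈ M.map U.subtype ↔ z ∈ M := by
  simp only [Subgroup.mem_map, Subgroup.coe_subtype]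
  constructor
  · rintro ⟨y, hy, hyz⟩
    rwa [show y = z from Subtype.ext hyz] at hy
  · exact fun h => ⟨z, h, rfl⟩

lemma mapSubtypeOpen {U : Subgroup G} (hU : IsOpen (U : Set G)) {M : Subgroup ↥U}
    (hM : IsOpen (M : Set ↥U)) : IsOpen ((M.map U.subtype : Subgroup G) : Set G) := by
  have h : ((M.map U.subtype : Subgroup G) : Set G) = Subtype.val '' (M : Set ↥U) := by
    ext g
    simp [Subgroup.mem_map, Subgroup.coe_subtype]
  rw [h]
  exact hU.isOpenMap_subtype_val _ hM

/-- A maximal open subgroup of an open subgroup of a pro-p group is normal. -/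
lemma coatomNormal (hp : p.Prime) (hG : IsProPGroup p G) {U : Subgroup G}
    (hU : IsOpen (U : Set G)) {M : Subgroup ↥U} (hMo : IsOpen (M : Set ↥U))
    (hMc : IsCoatom M) : M.Normal := by
  obtain ⟨hcomp, _, _, hidx⟩ := hG
  haveI : Fact p.Prime := ⟨hp⟩
  set MG := M.map U.subtype with hMGdef
  have hMGopen : IsOpen (MG : Set G) := mapSubtypeOpen hU hMo
  have hMGclopen : IsClopen (MG : Set G) :=
    ⟨Subgroup.isClosed_of_isOpen _ hMGopen, hMGopen⟩
  obtain ⟨W, hW⟩ := IsTopologicalGroup.exist_openNormalSubgroup_sub_clopen_nhds_of_one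
    hMGclopen MG.one_mem
  obtain ⟨n, hn⟩ := hidx W.toSubgroup inferInstance W.toOpenSubgroup.isOpen
  have hfin : Finite (G ⧸ W.toSubgroup) := by
    refine Nat.finite_of_card_ne_zero ?_
    have : Nat.card (G ⧸ W.toSubgroup) = W.toSubgroup.index := rfl
    rw [this, hn]
    exact pow_ne_zero _ hp.ne_zero
  have hpg : IsPGroup p (G ⧸ W.toSubgroup) :=
    IsPGroup.iff_card.2 ⟨n, by rw [show Nat.card (G ⧸ W.toSubgroup) = W.toSubgroup.index from rfl, hn]⟩
  set φ : ↥U →* G ⧸ W.toSubgroup := (QuotientGroup.mk' W.toSubgroup).comp U.subtype with hφ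
  set V : Subgroup ↥U := φ.ker with hV
  have hmemV : ∀ z : ↥U, z ∈ V ↔ (z : G) ∈ W.toSubgroup := by
    intro z
    rw [hV, MonoidHom.mem_ker, hφ, MonoidHom.comp_apply, QuotientGroup.mk'_apply,
      QuotientGroup.eq_one_iff]
    rfl
  have hVM : V ≤ M := by
    intro v hv
    have hvW : (v : G) ∈ W.toSubgroup := (hmemV v).1 hv
    have hvMG : (v : G) ∈ MG := hW hvW
    exact (memMapSubtype M v).1 hvMG
  haveI : Finite (↥U ⧸ V) := by
    haveI : Finite φ.range := Subgroup.instFiniteSubtypeMem φ.range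
    haveI : V.FiniteIndex := Subgroup.finiteIndex_ker φ
    infer_instance
  have hQp : IsPGroup p (↥U ⧸ V) := by
    intro q
    induction q using QuotientGroup.induction_on with
    | H x =>
      obtain ⟨k, hk⟩ := hpg (φ x)
      refine ⟨k, ?_⟩
      rw [← QuotientGroup.mk_pow, QuotientGroup.eq_one_iff, MonoidHom.mem_ker, map_pow]
      exact hk
  haveI : Group.IsNilpotent (↥U ⧸ V) := hQp.isNilpotent
  have hnc : NormalizerCondition (↥U ⧸ V) := normalizerCondition_of_isNilpotent
  set π := QuotientGroup.mk' V with hπ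
  have hsurj : Function.Surjective π := QuotientGroup.mk'_surjective V
  have hcm : (M.map π).comap π = M := by
    rw [Subgroup.comap_map_eq, QuotientGroup.ker_mk']
    exact sup_eq_left.2 hVM
  have hcoatom : IsCoatom (M.map π) := by
    constructor
    · intro htop
      apply hMc.1
      rw [← hcm, htop, Subgroup.comap_top]
    · intro b hb
      have hle : M ≤ b.comap π := hcm ▸ Subgroup.comap_mono hb.le
      have hlt : M < b.comap π := by
        refine lt_of_le_of_ne hle fun he => hb.ne ?_
        rw [← Subgroup.map_comap_eq_self_of_surjective hsurj b, ← he]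
      have := hMc.2 _ hlt
      rw [← Subgroup.map_comap_eq_self_of_surjective hsurj b, this]
      exact Subgroup.map_top_of_surjective π hsurj
  haveI hmn : (M.map π).Normal := Subgroup.NormalizerCondition.normal_of_coatom _ hnc hcoatom
  have : ((M.map π).comap π).Normal := Subgroup.Normal.comap hmn π
  rwa [hcm] at this

/-- Separation: a closed subgroup avoiding x is contained in an open subgroup avoiding x. -/
lemma existsOpenAvoiding (hG : IsProPGroup p G) {H : Subgroup G}
    (hH : IsClosed (H : Set G)) {x : G} (hx : x ∉ H) :
    ∃ U : Subgroup G, IsOpen (U : Set G) ∧ H ≤ U ∧ x ∉ U := by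
  obtain ⟨hcomp, ht2, htd, -⟩ := hG
  have hS : IsClosed {g : G | g * x⁻¹ ∈ H} := hH.preimage (continuous_mul_right x⁻¹)
  have h1S : (1 : G) ∉ {g : G | g * x⁻¹ ∈ H} := by
    intro h
    simp only [Set.mem_setOf_eq, one_mul] at h
    exact hx (by simpa using H.inv_mem h)
  obtain ⟨Wc, hWc, h1W, hWsub⟩ := compact_exists_isClopen_in_isOpen hS.isOpen_compl h1S
  obtain ⟨N, hN⟩ := IsTopologicalGroup.exist_openNormalSubgroup_sub_clopen_nhds_of_one hWc h1W
  refine ⟨H ⊔ N.toSubgroup, Subgroup.isOpen_mono le_sup_right N.toOpenSubgroup.isOpen,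
    le_sup_left, ?_⟩
  intro hxU
  have hset : ((H ⊔ N.toSubgroup : Subgroup G) : Set G) = (H : Set G) * N.toSubgroup :=
    Subgroup.mul_normal H N.toSubgroup
  have : x ∈ (H : Set G) * (N.toSubgroup : Set G) := hset ▸ hxU
  obtain ⟨h, hh, nn, hnn, hmul⟩ := this
  have hnS : nn ∈ {g : G | g * x⁻¹ ∈ H} := by
    have : nn = h⁻¹ * x := by rw [← hmul]; group
    simp only [Set.mem_setOf_eq, this]
    have : h⁻¹ * x * x⁻¹ = h⁻¹ := by group
    rw [this]
    exact H.inv_mem hh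
  exact (hWsub (hN hnn)) hnS

/-- Frattini monotonicity towards open subgroups. -/
lemma frattiniMono (hp : p.Prime) (hG : IsProPGroup p G) {H U : Subgroup G}
    (hU : IsOpen (U : Set G)) (hHU : H ≤ U) : frattiniOf H ≤ frattiniOf U := by
  intro x hx
  obtain ⟨y, hy, rfl⟩ := Subgroup.mem_map.1 hx
  refine Subgroup.mem_map.2 ⟨⟨(y : G), hHU y.2⟩, ?_, rfl⟩
  rw [Subgroup.mem_iInf]
  intro M
  rw [Subgroup.mem_iInf]
  rintro ⟨hMo, hMc⟩
  set MG := M.map U.subtype with hMGdef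
  have hMGopen : IsOpen (MG : Set G) := mapSubtypeOpen hU hMo
  rw [← memMapSubtype M ⟨(y : G), hHU y.2⟩]
  show (y : G) ∈ MG
  by_cases hc : H ≤ MG
  · exact hc y.2
  · haveI hMn : M.Normal := coatomNormal hp hG hU hMo hMc
    set N : Subgroup ↥H := MG.comap H.subtype with hNdef
    have hmemN : ∀ z : ↥H, z ∈ N ↔ (z : G) ∈ MG := fun z => Iff.rfl
    have hNopen : IsOpen (N : Set ↥H) := by
      have : (N : Set ↥H) = Subtype.val ⁻¹' (MG : Set G) := rfl
      rw [this]
      exact hMGopen.preimage continuous_subtype_val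
    have hNcoatom : IsCoatom N := by
      constructor
      · intro htop
        apply hc
        intro g hg
        have : (⟨g, hg⟩ : ↥H) ∈ N := htop ▸ Subgroup.mem_top _
        exact (hmemN _).1 this
      · intro K hK
        obtain ⟨k, hkK, hkN⟩ := SetLike.exists_of_lt hK
        rw [eq_top_iff]
        intro h _
        have hkU : (k : G) ∈ U := hHU k.2
        set k' : ↥U := ⟨(k : G), hkU⟩ with hk'def
        have hk'M : k' ∉ M := by
          intro hm
          exact hkN ((hmemN k).2 ((memMapSubtype M k').2 hm))
        have hsup : M ⊔ Subgroup.zpowers k' = ⊤ := by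
          refine hMc.2 _ (lt_of_le_of_ne le_sup_left fun he => ?_)
          have : k' ∈ M ⊔ Subgroup.zpowers k' :=
            Subgroup.mem_sup_right (Subgroup.mem_zpowers k')
          rw [← he] at this
          exact hk'M this
        set h' : ↥U := ⟨(h : G), hHU h.2⟩ with hh'def
        have hh'mem : h' ∈ M ⊔ Subgroup.zpowers k' := hsup ▸ Subgroup.mem_top _
        have hh'set : (h' : ↥U) ∈ (M : Set ↥U) * (Subgroup.zpowers k' : Set ↥U) := by
          rw [← Subgroup.normal_mul]
          exact hh'mem
        obtain ⟨m, hm, z, hz, hmz⟩ := hh'set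
        obtain ⟨j, rfl⟩ := Subgroup.mem_zpowers_iff.1 hz
        have hmG : (m : G) = (h : G) * ((k : G) ^ j)⁻¹ := by
          have : m = h' * (k' ^ j)⁻¹ := by rw [← hmz]; group
          rw [this]
          push_cast [hh'def, hk'def]
          rfl
        have hmH : (m : G) ∈ H := by
          rw [hmG]
          exact H.mul_mem h.2 (H.inv_mem (H.zpow_mem k.2 j))
        have hmN : (⟨(m : G), hmH⟩ : ↥H) ∈ N :=
          (hmemN _).2 ((memMapSubtype M m).2 hm)
        have hhk : h = (⟨(m : G), hmH⟩ : ↥H) * k ^ j := by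
          apply Subtype.ext
          push_cast
          rw [hmG]
          group
        rw [hhk]
        exact K.mul_mem (hK.le hmN) (K.zpow_mem hkK j)
    have hyN : y ∈ N := by
      have := Subgroup.mem_iInf.1 hy N
      exact (Subgroup.mem_iInf.1 this) ⟨hNopen, hNcoatom⟩
    exact (hmemN y).1 hyN

end Aux

/-- If `(G, U, Φ(U))` is hierarchical for every open subgroup `U`, then
`G` is strongly Frattini-resistant: `(G, H, Φ(H))` is hierarchical for every closed
subgroup `H`. -/
theorem stmt_10 {p : ℕ} (hp : p.Prime) (G : Type*) [Group G] [TopologicalSpace G]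
    [IsTopologicalGroup G] (hG : IsProPGroup p G)
    (hopen : ∀ U : Subgroup G, IsOpen (U : Set G) → Hierarchical p U (frattiniOf U)) :
    ∀ H : Subgroup G, IsClosed (H : Set G) → Hierarchical p H (frattiniOf H) := by
  intro H hH x hx
  by_contra hxH
  obtain ⟨U, hUopen, hHU, hxU⟩ := existsOpenAvoiding hG hH hxH
  exact hxU (hopen U hUopen x (frattiniMono hp hG hUopen hHU hx))
end

section
/- Every finitely generated Frattini-resistant pro-p group is strongly Frattini-resistant. -/
section Aux
variable {p : ℕ}

lemma aux_isCoatom_of_index_prime {G : Type*} [Group G] (hp : p.Prime) {M : Subgroup G}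
    (h : M.index = p) : IsCoatom M := by
  constructor
  · intro hM
    rw [hM, Subgroup.index_top] at h
    exact hp.one_lt.ne' h.symm
  · intro K hK
    have hmul := Subgroup.relIndex_mul_index hK.le
    rw [h] at hmul
    have hd : K.index ∣ p := Dvd.intro_left _ hmul
    rcases (Nat.Prime.eq_one_or_self_of_dvd hp _ hd) with h1 | hpK
    · exact Subgroup.index_eq_one.mp h1
    · exfalso
      rw [hpK] at hmul
      have : M.relIndex K = 1 := by
        have hp0 : p ≠ 0 := hp.ne_zero
        have h1 : M.relIndex K * p = 1 * p := by simpa using hmul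
        simpa using Nat.eq_of_mul_eq_mul_right (Nat.pos_of_ne_zero hp0) h1
      exact hK.ne' (le_antisymm hK.le (Subgroup.relIndex_eq_one.mp this)).symm

lemma aux_exists_openNormal {G : Type*} [Group G] [TopologicalSpace G] [IsTopologicalGroup G]
    [CompactSpace G] [T2Space G] [TotallyDisconnectedSpace G] {W : Set G} (hW : IsOpen W)
    (h1 : (1 : G) ∈ W) :
    ∃ V : Subgroup G, V.Normal ∧ IsOpen (V : Set G) ∧ (V : Set G) ⊆ W := by
  obtain ⟨C, hC, h1C, hCW⟩ := compact_exists_isClopen_in_isOpen hW h1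
  obtain ⟨V, hV⟩ := IsTopologicalGroup.exist_openNormalSubgroup_sub_clopen_nhds_of_one hC h1C
  exact ⟨V.toSubgroup, V.isNormal', V.isOpen, hV.trans hCW⟩

end Aux

section PG
variable {p : ℕ}

lemma aux_pgroup_coatom {P : Type*} [Group P] [Finite P] (hp : p.Prime) (hP : IsPGroup p P)
    {M : Subgroup P} (hM : IsCoatom M) : M.Normal ∧ M.index = p := by
  haveI : Fact p.Prime := ⟨hp⟩
  haveI : Group.IsNilpotent P := hP.isNilpotent
  have hnorm : M.Normal :=
    Subgroup.NormalizerCondition.normal_of_coatom M normalizerCondition_of_isNilpotent hM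
  refine ⟨hnorm, ?_⟩
  haveI := hnorm
  -- quotient is a p-group
  have hQ : IsPGroup p (P ⧸ M) := hP.to_quotient M
  obtain ⟨k, hk⟩ := (IsPGroup.iff_card).mp hQ
  have hindex : M.index = p ^ k := by rw [Subgroup.index_eq_card, hk]
  have hk0 : k ≠ 0 := by
    intro h0
    rw [h0, pow_zero] at hindex
    exact hM.1 (Subgroup.index_eq_one.mp hindex)
  rcases Nat.lt_or_ge k 2 with hk1 | hk2
  · interval_cases k
    · exact absurd rfl hk0
    · simpa using hindex
  · exfalso
    -- Cauchy: element of order p in P ⧸ M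
    have hdvd : p ∣ Nat.card (P ⧸ M) := by
      rw [hk]; exact dvd_pow_self p hk0
    obtain ⟨g, hg⟩ := exists_prime_orderOf_dvd_card' p hdvd
    set K : Subgroup (P ⧸ M) := Subgroup.zpowers g with hKdef
    have hcardK : Nat.card K = p := by rw [Nat.card_zpowers, hg]
    set K' : Subgroup P := K.comap (QuotientGroup.mk' M) with hK'def
    have hMK' : M ≤ K' := by
      intro m hm
      have : QuotientGroup.mk' M m = 1 := by
        rw [← MonoidHom.mem_ker, QuotientGroup.ker_mk']; exact hm
      simp only [hK'def, Subgroup.mem_comap, this]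
      exact K.one_mem
    have hne : M ≠ K' := by
      intro hEq
      have h2 : K = M.map (QuotientGroup.mk' M) := by
        conv_lhs => rw [← Subgroup.map_comap_eq_self_of_surjective
          (QuotientGroup.mk'_surjective M) K, ← hK'def, ← hEq]
      have h3 : M.map (QuotientGroup.mk' M) = ⊥ := by
        rw [eq_bot_iff]
        rintro q hq
        obtain ⟨m, hm, rfl⟩ := hq
        have : QuotientGroup.mk' M m = 1 := by
          rw [← MonoidHom.mem_ker, QuotientGroup.ker_mk']; exact hm
        simp [this]
      rw [h2, h3] at hcardK
      simp at hcardK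
      exact hp.one_lt.ne' hcardK.symm
    have hlt : M < K' := lt_of_le_of_ne hMK' hne
    have hK'top : K' = ⊤ := hM.2 _ hlt
    have : K = ⊤ := by
      rw [← Subgroup.map_comap_eq_self_of_surjective (QuotientGroup.mk'_surjective M) K,
        ← hK'def, hK'top, ← MonoidHom.range_eq_map,
        MonoidHom.range_eq_top.mpr (QuotientGroup.mk'_surjective M)]
    rw [this] at hcardK
    have : Nat.card (P ⧸ M) = p := by
      rw [← hcardK]
      exact (Nat.card_congr Subgroup.topEquiv.toEquiv).symm
    rw [this] at hk
    have : k = 1 := Nat.pow_right_injective hp.two_le (by simpa using hk.symm)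
    omega

end PG

section L1
variable {p : ℕ} {G : Type*} [Group G] [TopologicalSpace G] [IsTopologicalGroup G]

/-- In a compact group `G` where every open normal subgroup has `p`-power index,
every open coatom of an open subgroup `U` is normal of index `p` in `U`. -/
lemma aux_coatom_of_open (hp : p.Prime) [CompactSpace G] [T2Space G]
    [TotallyDisconnectedSpace G]
    (hidx : ∀ W : Subgroup G, W.Normal → IsOpen (W : Set G) → ∃ n : ℕ, W.index = p ^ n)
    {U : Subgroup G} (hU : IsOpen (U : Set G)) {N : Subgroup ↥U}
    (hNo : IsOpen (N : Set ↥U)) (hN : IsCoatom N) : N.Normal ∧ N.index = p := by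
  set N' : Subgroup G := N.map U.subtype with hN'def
  have hN'open : IsOpen (N' : Set G) := by
    have : (N' : Set G) = (Subtype.val : ↥U → G) '' (N : Set ↥U) := by
      ext g; simp [hN'def, Subgroup.mem_map]
    rw [this]
    exact hU.isOpenEmbedding_subtypeVal.isOpenMap _ hNo
  obtain ⟨V, hVnorm, hVopen, hVsub⟩ := aux_exists_openNormal hN'open (N'.one_mem)
  have hVN' : V ≤ N' := hVsub
  have hVU : V ≤ U := hVN'.trans (Subgroup.map_subtype_le N)
  haveI := hVnorm
  set Vu : Subgroup ↥U := V.subgroupOf U with hVudef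
  haveI : Vu.Normal := Subgroup.normal_subgroupOf
  have hVuN : Vu ≤ N := by
    have : Vu ≤ N'.comap U.subtype := fun x hx => hVN' hx
    rwa [hN'def, Subgroup.comap_map_eq_self_of_injective U.subtype_injective] at this
  -- the quotient U / Vu is a finite p-group
  obtain ⟨n, hVn⟩ := hidx V hVnorm hVopen
  have hdvd : Vu.index ∣ p ^ n := by
    rw [← hVn, hVudef]
    exact Subgroup.relIndex_dvd_index_of_normal V U
  obtain ⟨m, _, hm⟩ := (Nat.dvd_prime_pow hp).mp hdvd
  have hcard : Nat.card (↥U ⧸ Vu) = p ^ m := by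
    rw [← Subgroup.index_eq_card, hm]
  haveI : Finite (↥U ⧸ Vu) :=
    Nat.finite_of_card_ne_zero (by rw [hcard]; exact pow_ne_zero _ hp.ne_zero)
  have hQ : IsPGroup p (↥U ⧸ Vu) := IsPGroup.of_card hcard
  -- push N to the quotient
  set π := QuotientGroup.mk' Vu with hπdef
  have hπsurj : Function.Surjective π := QuotientGroup.mk'_surjective Vu
  set Nb : Subgroup (↥U ⧸ Vu) := N.map π with hNbdef
  have hcomap : Nb.comap π = N := by
    rw [hNbdef, Subgroup.comap_map_eq, hπdef, QuotientGroup.ker_mk', sup_eq_left.mpr hVuN]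
  have hNbcoatom : IsCoatom Nb := by
    constructor
    · intro hTop
      have : Nb.comap π = ⊤ := by rw [hTop, Subgroup.comap_top]
      rw [hcomap] at this
      exact hN.1 this
    · intro Kb hKb
      have hle : N ≤ Kb.comap π := hcomap ▸ Subgroup.comap_mono hKb.le
      have hne : N ≠ Kb.comap π := by
        intro hEq
        have : Nb = Kb := by
          rw [hNbdef, hEq, Subgroup.map_comap_eq_self_of_surjective hπsurj]
        exact hKb.ne this
      have : Kb.comap π = ⊤ := hN.2 _ (lt_of_le_of_ne hle hne)
      rw [← Subgroup.map_comap_eq_self_of_surjective hπsurj Kb, this]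
      exact Subgroup.map_top_of_surjective π hπsurj
  obtain ⟨hNbnorm, hNbidx⟩ := aux_pgroup_coatom hp hQ hNbcoatom
  constructor
  · rw [← hcomap]; exact hNbnorm.comap π
  · rw [← hcomap, Subgroup.index_comap, MonoidHom.range_eq_top.mpr hπsurj,
      Subgroup.relIndex_top_right, hNbidx]

end L1

section TopFGOpen
variable {G : Type*} [Group G] [TopologicalSpace G] [IsTopologicalGroup G]

lemma aux_topFG_of_isOpen [CompactSpace G] (hfg : TopFG (⊤ : Subgroup G))
    {U : Subgroup G} (hU : IsOpen (U : Set G)) : TopFG U := by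
  obtain ⟨S, hS⟩ := hfg
  set D : Subgroup G := Subgroup.closure (S : Set G) with hDdef
  have hDdense : Dense (D : Set G) := by
    have : (D.topologicalClosure : Set G) = ((⊤ : Subgroup G) : Set G) := by rw [hS]
    have h2 : closure (D : Set G) = Set.univ := by
      simp only [Subgroup.coe_top] at this; exact this
    rw [dense_iff_closure_eq, h2]
  haveI : Group.FG ↥D := (Group.fg_iff_subgroup_fg D).mpr ⟨S, rfl⟩
  haveI : Finite (G ⧸ U) := Subgroup.quotient_finite_of_isOpen U hU
  haveI : U.FiniteIndex := Subgroup.finiteIndex_of_finite_quotient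
  haveI : Group.FG ↥(U.subgroupOf D) := inferInstance
  obtain ⟨T, hT⟩ := (Group.fg_iff_subgroup_fg (U.subgroupOf D)).mp inferInstance
  haveI := Classical.decEq G
  refine ⟨T.image (Subtype.val : ↥D → G), ?_⟩
  have hTmap : Subgroup.closure ((T.image (Subtype.val : ↥D → G) : Finset G) : Set G)
      = U ⊓ D := by
    have hvv : (Subtype.val '' (T : Set ↥D)) = (⇑D.subtype '' (T : Set ↥D)) := rfl
    rw [Finset.coe_image, hvv, ← MonoidHom.map_closure D.subtype (T : Set ↥D), hT,
      Subgroup.subgroupOf_map_subtype]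
  rw [hTmap]
  apply SetLike.ext'
  show closure ((U ⊓ D : Subgroup G) : Set G) = (U : Set G)
  apply le_antisymm
  · exact closure_minimal (by exact_mod_cast inf_le_left) (Subgroup.isClosed_of_isOpen U hU)
  · intro u hu
    rw [mem_closure_iff]
    intro W hWopen hWu
    have h1 : (W ∩ (U : Set G)).Nonempty := ⟨u, hWu, hu⟩
    obtain ⟨y, hy⟩ := hDdense.inter_open_nonempty _ (hWopen.inter hU) h1
    exact ⟨y, hy.1.1, hy.1.2, hy.2⟩

end TopFGOpen

open scoped Pointwise

/-- Every finitely generated Frattini-resistant pro-`p` group is strongly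
Frattini-resistant. -/
theorem stmt_11 {p : ℕ} (hp : p.Prime) (G : Type*) [Group G] [TopologicalSpace G]
    [IsTopologicalGroup G] (hG : IsProPGroup p G) (hfg : TopFG (⊤ : Subgroup G))
    (hFR : FrattiniResistant p G) :
    ∀ H : Subgroup G, IsClosed (H : Set G) → Hierarchical p H (frattiniOf H) := by
  obtain ⟨hcomp, ht2, htd, hidx⟩ := hG
  haveI := hcomp; haveI := ht2; haveI := htd
  intro H hH x hx
  rw [frattiniOf, Subgroup.mem_map] at hx
  obtain ⟨y, hy, hyx⟩ := hx
  have hpH : x ^ p ∈ H := by rw [← hyx]; exact y.2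
  -- `x` lies in every open subgroup containing `H`
  have key : ∀ U : Subgroup G, IsOpen (U : Set G) → H ≤ U → x ∈ U := by
    intro U hUopen hHU
    have hUclosed : IsClosed (U : Set G) := Subgroup.isClosed_of_isOpen U hUopen
    have hUfg : TopFG U := aux_topFG_of_isOpen hfg hUopen
    apply hFR U hUclosed hUfg x
    have hpU : x ^ p ∈ U := hHU hpH
    rw [frattiniOf, Subgroup.mem_map]
    refine ⟨⟨x ^ p, hpU⟩, ?_, rfl⟩
    rw [Subgroup.mem_iInf]
    intro N
    rw [Subgroup.mem_iInf]
    rintro ⟨hNopen, hNcoatom⟩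
    obtain ⟨hNnorm, hNidx⟩ := aux_coatom_of_open hp hidx hUopen hNopen hNcoatom
    haveI := hNnorm
    by_cases hcase : H.subgroupOf U ≤ N
    · exact hcase (by simpa [Subgroup.mem_subgroupOf] using hpH)
    · set ι : ↥H →* ↥U := Subgroup.inclusion hHU with hιdef
      set M : Subgroup ↥H := N.comap ι with hMdef
      have hMidx : M.index = p := by
        rw [hMdef, Subgroup.index_comap, hιdef, Subgroup.inclusion_range]
        have hdvd : N.relIndex (H.subgroupOf U) ∣ N.index :=
          Subgroup.relIndex_dvd_index_of_normal N (H.subgroupOf U)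
        rw [hNidx] at hdvd
        rcases hp.eq_one_or_self_of_dvd _ hdvd with h1 | hpp
        · exact absurd (Subgroup.relIndex_eq_one.mp h1) hcase
        · exact hpp
      have hMcoatom : IsCoatom M := aux_isCoatom_of_index_prime hp hMidx
      have hcont : Continuous (fun z : ↥H => (ι z : ↥U)) :=
        Continuous.subtype_mk continuous_subtype_val _
      have hMopen : IsOpen (M : Set ↥H) := by
        have : (M : Set ↥H) = (fun z : ↥H => (ι z : ↥U)) ⁻¹' (N : Set ↥U) := rfl
        rw [this]
        exact hNopen.preimage hcont
      rw [Subgroup.mem_iInf] at hy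
      have hy2 := hy M
      rw [Subgroup.mem_iInf] at hy2
      have hyM : y ∈ M := hy2 ⟨hMopen, hMcoatom⟩
      have hval : ι y = (⟨x ^ p, hpU⟩ : ↥U) := Subtype.ext hyx
      rw [← hval]
      exact hyM
  by_contra hxH
  set C : Set G := (fun h => h * x) '' (H : Set G) with hCdef
  have hCclosed : IsClosed C :=
    ((hH.isCompact).image (continuous_mul_right x)).isClosed
  have h1C : (1 : G) ∈ Cᶜ := by
    rintro ⟨h, hhH, hh1⟩
    have : x = h⁻¹ := eq_inv_of_mul_eq_one_right hh1
    exact hxH (this ▸ H.inv_mem hhH)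
  obtain ⟨V, hVnorm, hVopen, hVsub⟩ := aux_exists_openNormal hCclosed.isOpen_compl h1C
  haveI := hVnorm
  have hxU : x ∈ H ⊔ V :=
    key (H ⊔ V) (Subgroup.isOpen_mono le_sup_right hVopen) le_sup_left
  have hxU' : x ∈ ((H : Set G) * (V : Set G)) := by
    rw [← Subgroup.mul_normal]; exact hxU
  obtain ⟨h, hhH, v, hvV, hhv⟩ := hxU'
  have : h⁻¹ * x ∈ V := by rw [show h⁻¹ * x = v from by rw [← hhv]; group]; exact hvV
  exact hVsub this ⟨h⁻¹, H.inv_mem hhH, rfl⟩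
end

section
/- Every commutator-resistant pro-p group is Frattini-resistant: if (H, Φ(H), [H,H]) is a hierarchical triple for every finitely generated closed subgroup H of G, then (G, H, Φ(H)) is hierarchical for every finitely generated closed subgroup H of G. -/
open Pointwise
open scoped commutatorElement

section AuxGroup



variable {Γ : Type*} [Group Γ]

theorem aux_pow_mul_pow_inv_mem_commutator (a b : Γ) (n : ℕ) :
    a ^ n * b ^ n * ((a * b) ^ n)⁻¹ ∈ commutator Γ := by
  have h : (QuotientGroup.mk (a ^ n * b ^ n * ((a * b) ^ n)⁻¹) :
      Abelianization Γ) = 1 := by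
    show Abelianization.of (a ^ n * b ^ n * ((a * b) ^ n)⁻¹) = 1
    rw [map_mul, map_mul, map_inv, map_pow, map_pow, map_pow, map_mul, mul_pow]
    group
  exact (QuotientGroup.eq_one_iff _).mp h

theorem aux_pow_mul_pow_inv_mem {H : Subgroup Γ} {a b : Γ}
    (ha : a ∈ H) (hb : b ∈ H) (n : ℕ) :
    a ^ n * b ^ n * ((a * b) ^ n)⁻¹ ∈ ⁅H, H⁆ := by
  have h := aux_pow_mul_pow_inv_mem_commutator (⟨a, ha⟩ : H) (⟨b, hb⟩ : H) n
  have h2 : H.subtype ((⟨a, ha⟩ : H) ^ n * (⟨b, hb⟩ : H) ^ n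
      * (((⟨a, ha⟩ : H) * (⟨b, hb⟩ : H)) ^ n)⁻¹) ∈ (commutator ↥H).map H.subtype :=
    Subgroup.mem_map_of_mem _ h
  rw [commutator_def, Subgroup.map_commutator] at h2
  have h3 : (⊤ : Subgroup ↥H).map H.subtype = H := by
    rw [← MonoidHom.range_eq_map, Subgroup.subtype_range]
  rw [h3] at h2
  simpa using h2



end AuxGroup

section AuxTop

section TopAux

variable {P : Type*} [Group P] [TopologicalSpace P] [IsTopologicalGroup P] [CompactSpace P]

theorem aux_finite_above {V : Subgroup P} (hV : IsOpen (V : Set P)) :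
    {M : Subgroup P | V ≤ M}.Finite := by
  have : Finite (P ⧸ V) := Subgroup.quotient_finite_of_isOpen V hV
  apply Set.Finite.of_finite_image
    (f := fun M : Subgroup P => (QuotientGroup.mk '' (M : Set P) : Set (P ⧸ V)))
  · exact Set.toFinite _
  · rintro M₁ h₁ M₂ h₂ himg
    have key : ∀ M M' : Subgroup P, V ≤ M' →
        (QuotientGroup.mk '' (M : Set P) : Set (P ⧸ V)) ⊆ QuotientGroup.mk '' (M' : Set P) →
        M ≤ M' := by
      intro M M' hM' hsub m hm
      obtain ⟨m', hm', he⟩ := hsub ⟨m, hm, rfl⟩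
      have hv : m'⁻¹ * m ∈ V := QuotientGroup.eq.mp he
      simpa using M'.mul_mem hm' (hM' hv)
    exact le_antisymm (key _ _ h₂ (le_of_eq himg)) (key _ _ h₁ (le_of_eq himg.symm))

variable [T2Space P] [TotallyDisconnectedSpace P]

theorem aux_exists_open_sup_avoiding {H : Subgroup P} (hHc : IsClosed (H : Set P))
    {g : P} (hg : g ∉ H) :
    ∃ V : Subgroup P, IsOpen (V : Set P) ∧ H ≤ V ∧ g ∉ V := by
  set T : Set P := (fun h => h * g) '' (H : Set P) with hT
  have hTc : IsClosed T := (Homeomorph.mulRight g).isClosedMap _ hHc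
  have h1T : (1 : P) ∉ T := by
    rintro ⟨h, hh, he⟩
    have : h = g⁻¹ := eq_inv_of_mul_eq_one_left he
    rw [this] at hh
    exact hg (by simpa using H.inv_mem hh)
  obtain ⟨W, hWclopen, h1W, hWsub⟩ :=
    compact_exists_isClopen_in_isOpen hTc.isOpen_compl h1T
  obtain ⟨U, hU⟩ :=
    IsTopologicalGroup.exist_openNormalSubgroup_sub_clopen_nhds_of_one hWclopen h1W
  refine ⟨H ⊔ U.toOpenSubgroup.toSubgroup, Subgroup.isOpen_mono le_sup_right U.isOpen, le_sup_left, ?_⟩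
  intro hgv
  have hmem : g ∈ (H : Set P) * (U.toOpenSubgroup.toSubgroup : Set P) := by
    rw [← Subgroup.mul_normal]; exact hgv
  obtain ⟨h, hh, u, hu, he⟩ := hmem
  have huT : u ∈ T := ⟨h⁻¹, H.inv_mem hh, by rw [← he]; group⟩
  exact (hWsub (hU hu)) huT

theorem aux_exists_open_coatom_above {H : Subgroup P} (hHc : IsClosed (H : Set P))
    (hne : H ≠ ⊤) :
    ∃ M : Subgroup P, IsOpen (M : Set P) ∧ IsCoatom M ∧ H ≤ M := by
  obtain ⟨g, hg⟩ : ∃ g, g ∉ H := by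
    by_contra h
    push_neg at h
    exact hne ((Subgroup.eq_top_iff' H).mpr h)
  obtain ⟨V, hVopen, hHV, hgV⟩ := aux_exists_open_sup_avoiding hHc hg
  have hFfin : {M : Subgroup P | V ≤ M ∧ M ≠ ⊤}.Finite :=
    (aux_finite_above hVopen).subset fun M hM => hM.1
  have hFne : {M : Subgroup P | V ≤ M ∧ M ≠ ⊤}.Nonempty :=
    ⟨V, le_refl V, fun hVtop => hgV (hVtop ▸ Subgroup.mem_top g)⟩
  obtain ⟨M, hMF, hMmax⟩ := Set.Finite.exists_maximalFor id _ hFfin hFne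
  refine ⟨M, Subgroup.isOpen_mono hMF.1 hVopen, ⟨hMF.2, fun M' hM' => ?_⟩,
    le_trans hHV hMF.1⟩
  by_contra hM'top
  exact hM'.ne (le_antisymm hM'.le (hMmax (j := M') ⟨le_trans hMF.1 hM'.le, hM'top⟩ hM'.le))

theorem aux_exists_open_coatom_avoiding {p : ℕ} (hp : p.Prime)
    {N : Subgroup P} (hNc : IsClosed (N : Set P))
    (hpow : ∀ a : P, a ^ p ∈ N) (hcomm : ∀ a b : P, ⁅a, b⁆ ∈ N)
    {g : P} (hg : g ∉ N) :
    ∃ M : Subgroup P, IsOpen (M : Set P) ∧ IsCoatom M ∧ g ∉ M := by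
  obtain ⟨V, hVopen, hNV, hgV⟩ := aux_exists_open_sup_avoiding hNc hg
  have hFfin : {M : Subgroup P | V ≤ M ∧ g ∉ M}.Finite :=
    (aux_finite_above hVopen).subset fun M hM => hM.1
  have hFne : {M : Subgroup P | V ≤ M ∧ g ∉ M}.Nonempty := ⟨V, le_refl V, hgV⟩
  obtain ⟨M, hMF, hMmax⟩ := Set.Finite.exists_maximalFor id _ hFfin hFne
  obtain ⟨hVM, hgM⟩ := hMF
  have hNM : N ≤ M := le_trans hNV hVM
  have hMopen : IsOpen (M : Set P) := Subgroup.isOpen_mono hVM hVopen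
  haveI hMnormal : M.Normal := by
    refine ⟨fun m hm y => ?_⟩
    have he : y * m * y⁻¹ = ⁅y, m⁆ * m := by group
    rw [he]
    exact M.mul_mem (hNM (hcomm y m)) hm
  -- step 1 : for z outside M, g belongs to M ⊔ zpowers z
  have h1 : ∀ z, z ∉ M → g ∈ M ⊔ Subgroup.zpowers z := by
    intro z hz
    by_contra hgMz
    have heq : M = M ⊔ Subgroup.zpowers z :=
      le_antisymm le_sup_left (hMmax ⟨le_trans hVM le_sup_left, hgMz⟩ le_sup_left)
    apply hz
    rw [heq]
    exact Subgroup.mem_sup_right (Subgroup.mem_zpowers z)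
  -- step 2 : for z outside M, z belongs to M ⊔ zpowers g
  have hkey : ∀ z, z ∉ M → z ∈ M ⊔ Subgroup.zpowers g := by
    intro z hz
    set π := QuotientGroup.mk' M with hπ
    have hπg : π g ≠ 1 := fun h => hgM ((QuotientGroup.eq_one_iff g).mp h)
    have hπzp : (π z) ^ p = 1 := by
      rw [← map_pow]
      exact (QuotientGroup.eq_one_iff _).mpr (hNM (hpow z))
    have h2 : π g ∈ Subgroup.zpowers (π z) := by
      have hmem := Subgroup.mem_map_of_mem π (h1 z hz)
      have hmapM : M.map π = ⊥ := by
        rw [Subgroup.map_eq_bot_iff, QuotientGroup.ker_mk']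
      rw [Subgroup.map_sup, hmapM, bot_sup_eq, MonoidHom.map_zpowers] at hmem
      exact hmem
    obtain ⟨k, hk⟩ := Subgroup.mem_zpowers_iff.mp h2
    have hpk : ¬ ((p : ℤ) ∣ k) := by
      rintro ⟨m, rfl⟩
      apply hπg
      rw [← hk, zpow_mul, zpow_natCast, hπzp, one_zpow]
    have hcop : IsCoprime k (p : ℤ) := by
      rw [Int.isCoprime_iff_gcd_eq_one]
      rcases hp.eq_one_or_self_of_dvd (Int.gcd k p)
          (Int.ofNat_dvd.mp (Int.dvd_natAbs.mpr (Int.gcd_dvd_right k p))) with h | h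
      · exact h
      · exfalso
        apply hpk
        have : (↑(Int.gcd k (p:ℤ)) : ℤ) ∣ k := Int.gcd_dvd_left k p
        rwa [h] at this
    obtain ⟨u, v, huv⟩ := hcop
    have hzg : π z = (π g) ^ u := by
      calc π z = (π z) ^ (u * k + v * (p : ℤ)) := by rw [huv, zpow_one]
        _ = ((π z) ^ k) ^ u * ((π z) ^ (p : ℤ)) ^ v := by
            rw [mul_comm u k, mul_comm v (p : ℤ), zpow_add, zpow_mul, zpow_mul]
        _ = (π g) ^ u := by rw [hk, zpow_natCast, hπzp, one_zpow, mul_one]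
    have hmem : z * (g ^ u)⁻¹ ∈ M := by
      apply (QuotientGroup.eq_one_iff _).mp
      show π (z * (g ^ u)⁻¹) = 1
      rw [map_mul, map_inv, map_zpow, ← hzg, mul_inv_cancel]
    have hz2 : z = (z * (g ^ u)⁻¹) * g ^ u := by group
    rw [hz2]
    exact Subgroup.mul_mem _ (Subgroup.mem_sup_left hmem)
      (Subgroup.mem_sup_right (Subgroup.zpow_mem_zpowers g u))
  refine ⟨M, hMopen, ⟨fun hMtop => hgM (hMtop ▸ Subgroup.mem_top g), fun M' hMM' => ?_⟩, hgM⟩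
  obtain ⟨z, hzM', hzM⟩ := SetLike.exists_of_lt hMM'
  have hgM' : g ∈ M' := sup_le hMM'.le (Subgroup.zpowers_le.mpr hzM') (h1 z hzM)
  rw [eq_top_iff]
  intro w _
  by_cases hw : w ∈ M
  · exact hMM'.le hw
  · exact sup_le hMM'.le (Subgroup.zpowers_le.mpr hgM') (hkey w hw)

end TopAux


section TopAux4

variable {P : Type*} [Group P] [TopologicalSpace P] [IsTopologicalGroup P] [CompactSpace P]
variable [T2Space P] [TotallyDisconnectedSpace P]

theorem aux_frattini_le {p : ℕ} (hp : p.Prime) :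
    (⨅ M ∈ {M : Subgroup P | IsOpen (M : Set P) ∧ IsCoatom M}, M) ≤
      (Subgroup.closure ((fun a => a ^ p) '' Set.univ) ⊔ commutator P).topologicalClosure := by
  intro g hg
  by_contra hgN
  set N := (Subgroup.closure ((fun a => a ^ p) '' (Set.univ : Set P))
      ⊔ commutator P).topologicalClosure with hN
  have hNc : IsClosed (N : Set P) := Subgroup.isClosed_topologicalClosure _
  have hpow : ∀ a : P, a ^ p ∈ N := fun a =>
    Subgroup.le_topologicalClosure _
      (Subgroup.mem_sup_left (Subgroup.subset_closure ⟨a, Set.mem_univ a, rfl⟩))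
  have hcomm : ∀ a b : P, ⁅a, b⁆ ∈ N := fun a b =>
    Subgroup.le_topologicalClosure _
      (Subgroup.mem_sup_right
        (Subgroup.commutator_mem_commutator (Subgroup.mem_top a) (Subgroup.mem_top b)))
  obtain ⟨M, hMopen, hMcoatom, hgM⟩ :=
    aux_exists_open_coatom_avoiding hp hNc hpow hcomm hgN
  apply hgM
  simp only [Subgroup.mem_iInf] at hg
  exact hg M ⟨hMopen, hMcoatom⟩

end TopAux4

section TopClAux

variable {G : Type*} [Group G] [TopologicalSpace G] [IsTopologicalGroup G]

theorem aux_topClosure_sup_left (A B : Subgroup G) :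
    (A.topologicalClosure ⊔ B).topologicalClosure = (A ⊔ B).topologicalClosure := by
  apply le_antisymm
  · apply Subgroup.topologicalClosure_minimal
    · refine sup_le ?_ (le_trans le_sup_right (Subgroup.le_topologicalClosure _))
      exact Subgroup.topologicalClosure_minimal _
        (le_trans le_sup_left (Subgroup.le_topologicalClosure _))
        (Subgroup.isClosed_topologicalClosure _)
    · exact Subgroup.isClosed_topologicalClosure _
  · apply Subgroup.topologicalClosure_minimal
    · exact le_trans (sup_le_sup_right (Subgroup.le_topologicalClosure A) B)
        (Subgroup.le_topologicalClosure _)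
    · exact Subgroup.isClosed_topologicalClosure _

end TopClAux

section AuxConj

variable {G : Type*} [Group G] [TopologicalSpace G] [IsTopologicalGroup G]


variable {G : Type*} [Group G] [TopologicalSpace G] [IsTopologicalGroup G]

theorem aux_conj_mem_commClosure {K : Subgroup G} {k c : G} (hk : k ∈ K)
    (hc : c ∈ commClosure K) : k * c * k⁻¹ ∈ commClosure K := by
  have hcont : Continuous fun y : G => k * y * k⁻¹ :=
    ((continuous_mul_left k).mul continuous_const)
  have hmaple : Subgroup.map (MulAut.conj k).toMonoidHom ⁅K, K⁆ ≤ ⁅K, K⁆ := by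
    rw [Subgroup.map_commutator]
    have hKK : K.map (MulAut.conj k).toMonoidHom ≤ K := by
      rintro _ ⟨y, hy, rfl⟩
      simpa [MulAut.conj] using K.mul_mem (K.mul_mem hk hy) (K.inv_mem hk)
    exact Subgroup.commutator_mono hKK hKK
  have hsub : (fun y : G => k * y * k⁻¹) '' ((⁅K, K⁆ : Subgroup G) : Set G) ⊆ ((⁅K, K⁆ : Subgroup G) : Set G) := by
    rintro _ ⟨y, hy, rfl⟩
    exact hmaple ⟨y, hy, rfl⟩
  have hc' : c ∈ _root_.closure ((⁅K, K⁆ : Subgroup G) : Set G) := by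
    rw [← Subgroup.topologicalClosure_coe]; exact hc
  have h1 : k * c * k⁻¹ ∈ (fun y : G => k * y * k⁻¹) ''
      _root_.closure ((⁅K, K⁆ : Subgroup G) : Set G) := ⟨c, hc', rfl⟩
  have h2 := image_closure_subset_closure_image hcont h1
  have h3 := closure_mono hsub h2
  show k * c * k⁻¹ ∈ (⁅K, K⁆ : Subgroup G).topologicalClosure
  rw [← SetLike.mem_coe, Subgroup.topologicalClosure_coe]
  exact h3


end AuxConj

end AuxTop

/-- Every commutator-resistant pro-`p` group is Frattini-resistant: if
`(H, Φ(H), [H,H])` is hierarchical for every finitely generated closed subgroup `H`,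
then `(G, H, Φ(H))` is hierarchical for every finitely generated closed subgroup `H`. -/
theorem stmt_12 {p : ℕ} (hp : p.Prime) (G : Type*) [Group G] [TopologicalSpace G]
    [IsTopologicalGroup G] (hG : IsProPGroup p G)
    (hCR : ∀ H : Subgroup G, IsClosed (H : Set G) → TopFG H →
      ∀ x ∈ H, x ^ p ∈ commClosure H → x ∈ frattiniOf H) :
    FrattiniResistant p G := by
  obtain ⟨hcpt, ht2, htd, -⟩ := hG
  classical
  intro H hHc hHfg x hx
  -- the subgroup K generated (topologically) by H and x
  set K := (H ⊔ Subgroup.zpowers x).topologicalClosure with hK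
  have hHK : H ≤ K := le_trans le_sup_left (Subgroup.le_topologicalClosure _)
  have hxK : x ∈ K := le_trans le_sup_right (Subgroup.le_topologicalClosure _)
    (Subgroup.mem_zpowers x)
  have hKc : IsClosed (K : Set G) := Subgroup.isClosed_topologicalClosure _
  have hKfg : TopFG K := by
    obtain ⟨S, hS⟩ := hHfg
    refine ⟨insert x S, ?_⟩
    rw [Finset.coe_insert, Set.insert_eq, Subgroup.closure_union,
      ← Subgroup.zpowers_eq_closure]
    have h2 := aux_topClosure_sup_left (Subgroup.closure (S : Set G)) (Subgroup.zpowers x)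
    rw [hS] at h2
    rw [sup_comm (Subgroup.zpowers x) (Subgroup.closure (S : Set G)), ← h2, hK, sup_comm]
  haveI : CompactSpace ↥H := isCompact_iff_compactSpace.mp hHc.isCompact
  haveI : CompactSpace ↥K := isCompact_iff_compactSpace.mp hKc.isCompact
  -- Step A : x ^ p lies in the closure of H^p [H,H]
  obtain ⟨w, hw, hwx⟩ := Subgroup.mem_map.mp hx
  have hwN := aux_frattini_le (P := ↥H) hp hw
  set A : Subgroup ↥H :=
    Subgroup.closure ((fun a => a ^ p) '' Set.univ) ⊔ commutator ↥H with hA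
  have hxA : x ^ p ∈ (A.map H.subtype).topologicalClosure := by
    rw [← hwx]
    have hw' : w ∈ _root_.closure (A : Set ↥H) := by
      rw [← Subgroup.topologicalClosure_coe]; exact hwN
    have h1 : H.subtype w ∈ H.subtype '' _root_.closure (A : Set ↥H) := ⟨w, hw', rfl⟩
    have h2 := image_closure_subset_closure_image continuous_subtype_val h1
    have h3 : (H.subtype) '' (A : Set ↥H) = ((A.map H.subtype) : Set G) :=
      (Subgroup.coe_map _ _).symm
    rw [← SetLike.mem_coe, Subgroup.topologicalClosure_coe, Subgroup.coe_map]
    exact h2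
  have hAmap : A.map H.subtype =
      Subgroup.closure ((fun a : G => a ^ p) '' (H : Set G)) ⊔ ⁅H, H⁆ := by
    rw [hA, Subgroup.map_sup]
    congr 1
    · rw [MonoidHom.map_closure]
      congr 1
      ext y
      constructor
      · rintro ⟨-, ⟨a, -, rfl⟩, rfl⟩
        exact ⟨(a : G), a.2, by simp⟩
      · rintro ⟨h, hh, rfl⟩
        exact ⟨(⟨h, hh⟩ : ↥H) ^ p, ⟨⟨h, hh⟩, Set.mem_univ _, rfl⟩, by simp⟩
    · rw [commutator_def, Subgroup.map_commutator]
      have h3 : (⊤ : Subgroup ↥H).map H.subtype = H := by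
        rw [← MonoidHom.range_eq_map, Subgroup.subtype_range]
      rw [h3]
  rw [hAmap] at hxA
  -- Step B : write x ^ p = h ^ p * c with h in H, c in the closed commutator of K
  set C := commClosure K with hC
  have hCclosed : IsClosed (C : Set G) := Subgroup.isClosed_topologicalClosure _
  set Pset := (fun a : G => a ^ p) '' (H : Set G) with hPset
  have hPcpt : IsCompact Pset := hHc.isCompact.image (continuous_pow p)
  have hconjC : ∀ k ∈ K, ∀ c ∈ C, k * c * k⁻¹ ∈ C := fun k hk c hc =>
    aux_conj_mem_commClosure hk hc
  have hKKle : ⁅K, K⁆ ≤ C := Subgroup.le_topologicalClosure _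
  have hHHle : ⁅H, H⁆ ≤ C := le_trans (Subgroup.commutator_mono hHK hHK) hKKle
  set Ssub : Subgroup G :=
    { carrier := Pset * (C : Set G)
      one_mem' := ⟨1, ⟨1, H.one_mem, one_pow p⟩, 1, C.one_mem, mul_one 1⟩
      mul_mem' := by
        rintro a b ⟨-, ⟨h1, hh1, rfl⟩, c1, hc1, rfl⟩ ⟨-, ⟨h2, hh2, rfl⟩, c2, hc2, rfl⟩
        have hq : h1 ^ p * h2 ^ p * ((h1 * h2) ^ p)⁻¹ ∈ C :=
          hHHle (aux_pow_mul_pow_inv_mem hh1 hh2 p)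
        have hq' : ((h1 * h2) ^ p)⁻¹ * (h1 ^ p * h2 ^ p * ((h1 * h2) ^ p)⁻¹) *
            (((h1 * h2) ^ p)⁻¹)⁻¹ ∈ C :=
          hconjC _ (K.inv_mem (K.pow_mem (hHK (H.mul_mem hh1 hh2)) p)) _ hq
        have hc1' : (h2 ^ p)⁻¹ * c1 * ((h2 ^ p)⁻¹)⁻¹ ∈ C :=
          hconjC _ (K.inv_mem (K.pow_mem (hHK hh2) p)) _ hc1
        refine ⟨(h1 * h2) ^ p, ⟨h1 * h2, H.mul_mem hh1 hh2, rfl⟩,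
          ((h1 * h2) ^ p)⁻¹ * (h1 ^ p * h2 ^ p * ((h1 * h2) ^ p)⁻¹) *
              (((h1 * h2) ^ p)⁻¹)⁻¹ * ((h2 ^ p)⁻¹ * c1 * ((h2 ^ p)⁻¹)⁻¹) * c2,
          C.mul_mem (C.mul_mem hq' hc1') hc2, by group⟩
      inv_mem' := by
        rintro a ⟨-, ⟨h, hh, rfl⟩, c, hc, rfl⟩
        refine ⟨(h⁻¹) ^ p, ⟨h⁻¹, H.inv_mem hh, rfl⟩, h ^ p * c⁻¹ * (h ^ p)⁻¹,
          hconjC _ (K.pow_mem (hHK hh) p) _ (C.inv_mem hc), by group⟩ } with hSsub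
  have hSclosed : IsClosed (Ssub : Set G) :=
    IsClosed.mul_left_of_isCompact hCclosed hPcpt
  have hle : Subgroup.closure Pset ⊔ ⁅H, H⁆ ≤ Ssub := by
    refine sup_le ((Subgroup.closure_le _).mpr fun a ha => ?_) fun c hc => ?_
    · exact ⟨a, ha, 1, C.one_mem, mul_one a⟩
    · exact ⟨1, ⟨1, H.one_mem, one_pow p⟩, c, hHHle hc, one_mul c⟩
  have hxS : x ^ p ∈ Ssub :=
    Subgroup.topologicalClosure_minimal _ hle hSclosed hxA
  obtain ⟨-, ⟨h, hh, rfl⟩, c, hc, hce⟩ := hxS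
  -- Step C : (h⁻¹ * x) ^ p lies in the closed commutator of K
  have hzK : h⁻¹ * x ∈ K := K.mul_mem (K.inv_mem (hHK hh)) hxK
  have hq : (h⁻¹) ^ p * x ^ p * ((h⁻¹ * x) ^ p)⁻¹ ∈ ⁅K, K⁆ :=
    aux_pow_mul_pow_inv_mem (K.inv_mem (hHK hh)) hxK p
  have hzp : (h⁻¹ * x) ^ p ∈ C := by
    have h2 : (h⁻¹ * x) ^ p =
        ((h⁻¹) ^ p * x ^ p * ((h⁻¹ * x) ^ p)⁻¹)⁻¹ * ((h⁻¹) ^ p * x ^ p) := by group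
    have h3 : (h⁻¹) ^ p * x ^ p = c := by rw [← hce]; group
    have hq2 : c * ((h⁻¹ * x) ^ p)⁻¹ ∈ C := by rw [← h3]; exact hKKle hq
    rw [h2, h3]
    exact C.mul_mem (C.inv_mem hq2) hc
  have hzΦ : h⁻¹ * x ∈ frattiniOf K := hCR K hKc hKfg _ hzK hzp
  -- Step D : conclude that K = H
  set H' : Subgroup ↥K := H.comap K.subtype with hH'
  by_cases htop : H' = ⊤
  · have hmem : (⟨x, hxK⟩ : ↥K) ∈ H' := htop ▸ Subgroup.mem_top _
    exact hmem
  · exfalso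
    have hH'c : IsClosed (H' : Set ↥K) := hHc.preimage continuous_subtype_val
    obtain ⟨M, hMopen, hMcoatom, hH'M⟩ := aux_exists_open_coatom_above hH'c htop
    set M' : Subgroup G := M.map K.subtype with hM'
    have hM'c : IsClosed (M' : Set G) := by
      have hMcompact : IsCompact (M : Set ↥K) :=
        (Subgroup.isClosed_of_isOpen M hMopen).isCompact
      have h3 : (M' : Set G) = Subtype.val '' (M : Set ↥K) := Subgroup.coe_map _ _
      rw [h3]
      exact (hMcompact.image continuous_subtype_val).isClosed
    have hHM' : H ≤ M' := fun a ha => ⟨⟨a, hHK ha⟩, hH'M (show a ∈ H from ha), rfl⟩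
    have hΦM' : frattiniOf K ≤ M' := by
      rintro - ⟨w', hw', rfl⟩
      refine ⟨w', ?_, rfl⟩
      have hw'' : w' ∈ (⨅ M ∈ {M : Subgroup ↥K | IsOpen (M : Set ↥K) ∧ IsCoatom M}, M) := hw'
      simp only [Subgroup.mem_iInf] at hw''
      exact hw'' M ⟨hMopen, hMcoatom⟩
    have hxM' : x ∈ M' := by
      have h4 : x = h * (h⁻¹ * x) := by group
      rw [h4]
      exact M'.mul_mem (hHM' hh) (hΦM' hzΦ)
    have hKM' : K ≤ M' :=
      Subgroup.topologicalClosure_minimal _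
        (sup_le hHM' (Subgroup.zpowers_le.mpr hxM')) hM'c
    apply hMcoatom.1
    rw [Subgroup.eq_top_iff']
    intro w'
    obtain ⟨m, hm, hmw⟩ := Subgroup.mem_map.mp (hKM' w'.2)
    exact (Subtype.ext hmw : m = w') ▸ hm
end
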